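/- arXiv:1907.05781 — 5 statements merged into one kernel-verified Lean document; each statement's English description precedes it below -/
import Mathlib

section
/- Covariance decomposition over a concentration graph (Jones–West). Let K = Σ⁻¹ be the concentration matrix of the random vector X_V. If K is adapted to the undirected graph G = (V,E), then for every pair of distinct vertices x,y ∈ V the covariance σ_xy satisfies σ_xy = Σ_{π ∈ Π_xy} ω(π,Σ), where the sum is over all paths π between x and y in G and ω(π,Σ) = (−1)^{|P|+1} (det K_{P̄P̄}/det K) ∏_{{u,v}∈E(π)} κ_uv with P = V(π). -/
open Matrix BigOperators Finset

variable {V : Type*} [Fintype V] [DecidableEq V]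

/-- Submatrix of `M` with rows indexed by `A` and columns indexed by `B`. -/
noncomputable def subm (M : Matrix V V ℝ) (A B : Finset V) : Matrix ↥A ↥B ℝ :=
  Matrix.of fun i j => M i.1 j.1

/-- Partial covariance matrix `Σ_{AA·B}` of `A` given a disjoint set `B`. -/
noncomputable def pcovOn (M : Matrix V V ℝ) (A B : Finset V) : Matrix ↥A ↥A ℝ :=
  subm M A A - subm M A B * (subm M B B)⁻¹ * subm M B A

/-- Partial covariance matrix `Σ_{AA·Ā}` given the complement of `A`. -/
noncomputable def pcov (M : Matrix V V ℝ) (A : Finset V) : Matrix ↥A ↥A ℝ :=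
  pcovOn M A Aᶜ

/-- Inflation factor of `A` on `B`. -/
noncomputable def inflF (M : Matrix V V ℝ) (A B : Finset V) : ℝ :=
  ((subm M A A).det * (subm M B B).det) / (subm M (A ∪ B) (A ∪ B)).det

/-- The path weight `ω(π, Γ)` of a walk `p`, computed from `Θ = Γ⁻¹`. -/
noncomputable def pathWeight (Γ : Matrix V V ℝ) {G : SimpleGraph V} {x y : V}
    (p : G.Walk x y) : ℝ :=
  (-1 : ℝ) ^ (p.support.toFinset.card + 1) *
    ((subm Γ⁻¹ p.support.toFinsetᶜ p.support.toFinsetᶜ).det / Γ⁻¹.det) *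
    (p.darts.map fun d => Γ⁻¹ d.toProd.1 d.toProd.2).prod

/-- The partial covariance weight `ω(π, Σ_{AA·Ā})` of a walk `p` with vertices in `A`,
expressed via `K = Σ⁻¹`: `(−1)^{|P|+1} (det K_{A∖P,A∖P}/det K_AA) ∏ κ_uv`. -/
noncomputable def partialPathWeight (S : Matrix V V ℝ) (A : Finset V) {G : SimpleGraph V}
    {x y : V} (p : G.Walk x y) : ℝ :=
  (-1 : ℝ) ^ (p.support.toFinset.card + 1) *
    ((subm S⁻¹ (A \ p.support.toFinset) (A \ p.support.toFinset)).det /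
      (subm S⁻¹ A A).det) *
    (p.darts.map fun d => S⁻¹ d.toProd.1 d.toProd.2).prod

/-- `K` is adapted to `G` when nonzero off-diagonal entries correspond to edges. -/
def Adapted (K : Matrix V V ℝ) (G : SimpleGraph V) : Prop :=
  ∀ u v : V, u ≠ v → K u v ≠ 0 → G.Adj u v

/-- Correlation-type scaling of a positive definite matrix. -/
noncomputable def corrScale {ι : Type*} (M : Matrix ι ι ℝ) : Matrix ι ι ℝ :=
  Matrix.of fun i j => M i j / (Real.sqrt (M i i) * Real.sqrt (M j j))

/-- The inflated correlation matrix `Φ^V = diag(K)^{1/2} Σ diag(K)^{1/2}`. -/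
noncomputable def inflCorr (S : Matrix V V ℝ) : Matrix V V ℝ :=
  Matrix.of fun u v => Real.sqrt (S⁻¹ u u) * S u v * Real.sqrt (S⁻¹ v v)

/-- The weight `ω(π, M)` of a walk `p` whose vertices lie in `P`, computed in the
induced subgraph from a matrix `M` indexed by `P`; here `V(π) = P`, so the determinant
factor (over the empty set) is `1`. -/
noncomputable def subPathWeight {P : Finset V} (M : Matrix ↥P ↥P ℝ) {G : SimpleGraph V}
    {x y : V} (p : G.Walk x y) (hp : ∀ v ∈ p.support, v ∈ P) : ℝ :=
  (-1 : ℝ) ^ (p.support.toFinset.card + 1) * (1 / M⁻¹.det) *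
    (p.darts.attach.map fun d =>
      M⁻¹ ⟨d.1.toProd.1, hp _ (SimpleGraph.Walk.dart_fst_mem_support_of_mem_darts p d.2)⟩
          ⟨d.1.toProd.2, hp _ (SimpleGraph.Walk.dart_snd_mem_support_of_mem_darts p d.2)⟩).prod

/-- Product of partial correlations `ρ_{uv·V∖{u,v}} = −κ_uv/(√κ_uu √κ_vv)`
over the edges of a walk. -/
noncomputable def prodPartialCorr (S : Matrix V V ℝ) {G : SimpleGraph V} {x y : V}
    (p : G.Walk x y) : ℝ :=
  (p.darts.map fun d => -(corrScale S⁻¹ d.toProd.1 d.toProd.2)).prod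

/-- A walk is chordless if every edge of `G` joining two of its vertices is an edge of
the walk. -/
def Chordless {G : SimpleGraph V} {x y : V} (p : G.Walk x y) : Prop :=
  ∀ u v : V, u ∈ p.support → v ∈ p.support → G.Adj u v → s(u, v) ∈ p.edges

/-- The quantity `φ(π, R) = det((I−R)_{P̄P̄}) ∏ ρ_{uv·V∖{u,v}}`. -/
noncomputable def phiWeight (S : Matrix V V ℝ) {G : SimpleGraph V} {x y : V}
    (p : G.Walk x y) : ℝ :=
  (subm (corrScale S⁻¹) p.support.toFinsetᶜ p.support.toFinsetᶜ).det * prodPartialCorr S p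

section AuxJW
set_option linter.unusedSectionVars false
set_option maxHeartbeats 1000000
open SimpleGraph Equiv Equiv.Perm

variable {G : SimpleGraph V}

lemma exists_walk_of_chain (l : List V) : ∀ (x y : V), List.Chain G.Adj x l →
    (x :: l).getLast (List.cons_ne_nil x l) = y → ∃ w : G.Walk x y, w.support = x :: l := by
  induction l with
  | nil =>
    intro x y _ hlast
    simp only [List.getLast_singleton] at hlast
    subst hlast
    exact ⟨SimpleGraph.Walk.nil, by simp⟩
  | cons b l ih =>
    intro x y hchain hlast
    change List.IsChain G.Adj (x :: b :: l) at hchain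
    rw [List.chain_cons] at hchain
    obtain ⟨w, hw⟩ := ih b y hchain.2 (by rw [← hlast, List.getLast_cons (List.cons_ne_nil b l)])
    exact ⟨SimpleGraph.Walk.cons hchain.1 w, by simp [hw]⟩

lemma walk_eq_of_support_eq : ∀ {a b : V} (w1 w2 : G.Walk a b), w1.support = w2.support → w1 = w2 := by
  intro a b w1
  induction w1 with
  | nil =>
    intro w2 h
    cases w2 with
    | nil => rfl
    | cons h' p => simp [Walk.support_cons] at h
  | @cons u v c h p ih =>
    intro w2 hsup
    cases w2 with
    | nil => simp [Walk.support_cons] at hsup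
    | @cons _ v' _ h' p' =>
      rw [Walk.support_cons, Walk.support_cons, List.cons.injEq] at hsup
      have hv : v = v' := by
        have h2 := hsup.2
        rw [p.support_eq_cons, p'.support_eq_cons] at h2
        injection h2
      subst hv
      rw [ih p' hsup.2]


lemma prod_dart_of_succ (f : V → V → ℝ) : ∀ {a b : V} (w : G.Walk a b), w.support.Nodup →
    ∀ (σ : Equiv.Perm V), (∀ d ∈ w.darts, σ d.toProd.1 = d.toProd.2) →
    ∏ i ∈ w.support.toFinset.erase b, f (σ i) i
      = (w.darts.map fun d => f d.toProd.2 d.toProd.1).prod := by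
  intro a b w
  induction w with
  | nil => intro _ σ _; simp
  | @cons u v c h w ih =>
    intro hnd σ hσ
    rw [Walk.support_cons, List.nodup_cons] at hnd
    have hu : u ∉ w.support := hnd.1
    have hub : u ≠ c := fun h' => hu (h' ▸ w.end_mem_support)
    have hfirst : σ u = v := hσ ⟨(u,v), h⟩ (by rw [Walk.darts_cons]; exact List.mem_cons_self)
    have hrest : ∀ d ∈ w.darts, σ d.toProd.1 = d.toProd.2 := fun d hd =>
      hσ d (by simp [Walk.darts_cons, hd])
    have hmem : u ∉ w.support.toFinset.erase c := by simp [hu]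
    rw [Walk.support_cons, List.toFinset_cons, Finset.erase_insert_of_ne hub,
      Finset.prod_insert hmem, Walk.darts_cons, List.map_cons, List.prod_cons,
      hfirst, ih hnd.2 σ hrest]

lemma formPerm_dart {a b : V} (w : G.Walk a b) (hnd : w.support.Nodup) :
    ∀ d ∈ w.darts, w.support.formPerm d.toProd.1 = d.toProd.2 := by
  intro d hd
  obtain ⟨i, hi, hdi⟩ := List.getElem_of_mem hd
  have hlen : w.darts.length = w.length := w.length_darts
  have hslen : w.support.length = w.length + 1 := w.length_support
  have hi' : i + 1 < w.support.length := by omega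
  have h1 : d.toProd.1 = w.support[i]'(by omega) := by
    have hmi : i < (w.darts.map (·.fst)).length := by simpa using hi
    have := List.getElem_of_eq w.map_fst_darts hmi
    simp only [List.getElem_map, hdi, List.getElem_dropLast] at this
    exact this
  have h2 : d.toProd.2 = w.support[i+1]'hi' := by
    have hmi : i < (w.darts.map (·.snd)).length := by simpa using hi
    have := List.getElem_of_eq w.map_snd_darts hmi
    simp only [List.getElem_map, hdi, List.getElem_tail] at this
    exact this
  rw [h1, h2, List.formPerm_apply_lt_getElem _ hnd i hi']

lemma support_getElem_zero {x y : V} (w : G.Walk x y) (h : 0 < w.support.length) :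
    w.support[0] = x := by
  rw [← List.head_eq_getElem_zero w.support_ne_nil]
  exact w.head_support

lemma formPerm_support_last {x y : V} (w : G.Walk x y) (hnd : w.support.Nodup) :
    w.support.formPerm y = x := by
  have hne : w.support ≠ [] := w.support_ne_nil
  have hlen : 0 < w.support.length := List.length_pos_iff.mpr hne
  have h1 : y = w.support[w.support.length - 1]'(by omega) := by
    rw [← List.getLast_eq_getElem]; exact w.getLast_support.symm
  have h2 := congrArg w.support.formPerm h1
  rw [List.formPerm_apply_getElem _ hnd] at h2
  rw [h2]
  have e1 : w.support.length - 1 + 1 = w.support.length := by omega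
  simp only [e1, Nat.mod_self]
  exact support_getElem_zero w hlen

lemma psi_mem {x y : V} (w : G.Walk x y) (τ : Equiv.Perm ↥(w.support.toFinsetᶜ)) {i : V}
    (hi : i ∈ w.support) :
    (w.support.formPerm * Equiv.Perm.ofSubtype τ) i = w.support.formPerm i := by
  have h1 : Equiv.Perm.ofSubtype τ i = i :=
    Equiv.Perm.ofSubtype_apply_of_not_mem τ (by simp [hi])
  rw [Equiv.Perm.mul_apply, h1]

lemma psi_not_mem {x y : V} (w : G.Walk x y) (τ : Equiv.Perm ↥(w.support.toFinsetᶜ)) {i : V}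
    (hi : i ∉ w.support) :
    (w.support.formPerm * Equiv.Perm.ofSubtype τ) i = Equiv.Perm.ofSubtype τ i := by
  have hmem : i ∈ w.support.toFinsetᶜ := by simp [hi]
  have h1 : Equiv.Perm.ofSubtype τ i = ↑(τ ⟨i, hmem⟩) := by
    rw [Equiv.Perm.ofSubtype_apply_of_mem τ hmem]
  have h2 : (↑(τ ⟨i, hmem⟩) : V) ∉ w.support := by
    have h3 := (τ ⟨i, hmem⟩).2
    rw [Finset.mem_compl, List.mem_toFinset] at h3
    exact h3
  rw [Equiv.Perm.mul_apply, h1, List.formPerm_apply_of_notMem h2]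

lemma psi_pow {x y : V} (w : G.Walk x y) (hnd : w.support.Nodup) (σ : Equiv.Perm V)
    (hagree : ∀ i ∈ w.support, σ i = w.support.formPerm i) :
    ∀ n (hn : n < w.support.length), (σ ^ n) x = w.support[n] := by
  intro n
  induction n with
  | zero =>
    intro hn
    rw [pow_zero, Equiv.Perm.one_apply, support_getElem_zero w hn]
  | succ n ih =>
    intro hn
    have hn' : n < w.support.length := by omega
    rw [pow_succ', Equiv.Perm.mul_apply, ih hn',
      hagree _ (w.support.getElem_mem hn'), List.formPerm_apply_lt_getElem _ hnd n hn]

lemma sign_psi {x y : V} (hxy : x ≠ y) (w : G.Walk x y) (hnd : w.support.Nodup)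
    (τ : Equiv.Perm ↥(w.support.toFinsetᶜ)) :
    ((Equiv.Perm.sign (w.support.formPerm * Equiv.Perm.ofSubtype τ) : ℤ) : ℝ)
      = (-1 : ℝ) ^ (w.support.toFinset.card + 1) * ((Equiv.Perm.sign τ : ℤ) : ℝ) := by
  have h2 : 2 ≤ w.support.length := by
    have hsub : ({x, y} : Finset V) ⊆ w.support.toFinset := by
      intro z hz
      simp only [Finset.mem_insert, Finset.mem_singleton] at hz
      rcases hz with rfl | rfl
      · simpa using w.start_mem_support
      · simpa using w.end_mem_support
    calc 2 = ({x, y} : Finset V).card := (Finset.card_pair hxy).symm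
      _ ≤ w.support.toFinset.card := Finset.card_le_card hsub
      _ = w.support.length := List.toFinset_card_of_nodup hnd
  have hcyc := List.isCycle_formPerm hnd h2
  have hsupp := List.support_formPerm_of_nodup w.support hnd
    (fun z hz => by rw [hz] at h2; simp at h2)
  have hmul : Equiv.Perm.sign (w.support.formPerm * Equiv.Perm.ofSubtype τ)
      = Equiv.Perm.sign w.support.formPerm * Equiv.Perm.sign (Equiv.Perm.ofSubtype τ) :=
    map_mul _ _ _
  rw [hmul, Equiv.Perm.sign_ofSubtype, hcyc.sign, hsupp]
  have hcard : w.support.toFinset.card = w.support.length := List.toFinset_card_of_nodup hnd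
  simp only [Units.val_mul, Units.val_neg, Units.val_pow_eq_pow_val, Units.val_one]
  push_cast
  rw [pow_succ]
  ring_nf

lemma prod_psi {x y : V} (K : Matrix V V ℝ) (w : G.Walk x y) (hnd : w.support.Nodup)
    (τ : Equiv.Perm ↥(w.support.toFinsetᶜ)) :
    ∏ i, (K.updateCol y (Pi.single x 1)) ((w.support.formPerm * Equiv.Perm.ofSubtype τ) i) i
      = ((w.darts.map fun d => K d.toProd.2 d.toProd.1).prod)
        * ∏ j : ↥(w.support.toFinsetᶜ), K ↑(τ j) ↑j := by
  set N := K.updateCol y (Pi.single x 1) with hN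
  set σ := w.support.formPerm * Equiv.Perm.ofSubtype τ with hσ
  rw [← Finset.prod_mul_prod_compl w.support.toFinset]
  congr 1
  · have hy : y ∈ w.support.toFinset := by simpa using w.end_mem_support
    rw [← Finset.mul_prod_erase _ _ hy]
    have hσy : σ y = x := by
      rw [hσ, psi_mem w τ w.end_mem_support, formPerm_support_last w hnd]
    have hNy : N (σ y) y = 1 := by
      rw [hσy, hN, Matrix.updateCol_self, Pi.single_eq_same]
    rw [hNy, one_mul]
    have hcongr : ∀ i ∈ w.support.toFinset.erase y, N (σ i) i = K (σ i) i := by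
      intro i hi
      have hiy : i ≠ y := (Finset.mem_erase.mp hi).1
      rw [hN, Matrix.updateCol_ne hiy]
    rw [Finset.prod_congr rfl hcongr]
    exact prod_dart_of_succ K w hnd σ (fun d hd => by
      rw [hσ, psi_mem w τ (w.dart_fst_mem_support_of_mem_darts hd)]
      exact formPerm_dart w hnd d hd)
  · have hyc : ∀ i ∈ w.support.toFinsetᶜ, i ≠ y := by
      intro i hi h
      subst h
      simp [w.end_mem_support] at hi
    have hcongr : ∀ i ∈ w.support.toFinsetᶜ, N (σ i) i = K ((Equiv.Perm.ofSubtype τ) i) i := by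
      intro i hi
      have hins : i ∉ w.support := by simpa using hi
      rw [hN, Matrix.updateCol_ne (hyc i hi), hσ, psi_not_mem w τ hins]
    rw [Finset.prod_congr rfl hcongr, ← Finset.prod_attach (w.support.toFinsetᶜ)
        (fun i => K ((Equiv.Perm.ofSubtype τ) i) i), Finset.univ_eq_attach]
    exact Finset.prod_congr rfl (fun j _ => by rw [Equiv.Perm.ofSubtype_apply_coe])

lemma sum_tau {x y : V} (hxy : x ≠ y) (K : Matrix V V ℝ) (w : G.Walk x y)
    (hnd : w.support.Nodup) :
    ∑ τ : Equiv.Perm ↥(w.support.toFinsetᶜ),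
        (((Equiv.Perm.sign (w.support.formPerm * Equiv.Perm.ofSubtype τ) : ℤ) : ℝ)
          * ∏ i, (K.updateCol y (Pi.single x 1))
              ((w.support.formPerm * Equiv.Perm.ofSubtype τ) i) i)
      = (-1 : ℝ) ^ (w.support.toFinset.card + 1)
          * (subm K w.support.toFinsetᶜ w.support.toFinsetᶜ).det
          * ((w.darts.map fun d => K d.toProd.2 d.toProd.1).prod) := by
  have hdet : (subm K w.support.toFinsetᶜ w.support.toFinsetᶜ).det
      = ∑ τ : Equiv.Perm ↥(w.support.toFinsetᶜ),
          ((Equiv.Perm.sign τ : ℤ) : ℝ) * ∏ j : ↥(w.support.toFinsetᶜ), K ↑(τ j) ↑j :=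
    Matrix.det_apply' _
  rw [hdet, Finset.mul_sum, Finset.sum_mul]
  refine Finset.sum_congr rfl (fun τ _ => ?_)
  rw [sign_psi hxy w hnd τ, prod_psi K w hnd τ]
  ring

lemma exists_walk_of_chain' (l : List V) (hl : l ≠ []) (hchain : l.Chain' G.Adj) {x y : V}
    (hhead : l.head hl = x) (hlast : l.getLast hl = y) : ∃ w : G.Walk x y, w.support = l := by
  cases l with
  | nil => exact absurd rfl hl
  | cons a t =>
    have hax : a = x := hhead
    subst hax
    exact exists_walk_of_chain t a y hchain hlast

noncomputable def psiMap (G : SimpleGraph V) (x y : V) :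
    (Σ p : G.Path x y, Equiv.Perm ↥((p : G.Walk x y).support.toFinsetᶜ)) → Equiv.Perm V :=
  fun z => ((z.1 : G.Walk x y).support.formPerm) * Equiv.Perm.ofSubtype z.2

lemma psi_pow_len {x y : V} (w : G.Walk x y) (hnd : w.support.Nodup)
    (τ : Equiv.Perm ↥(w.support.toFinsetᶜ)) :
    ((w.support.formPerm * Equiv.Perm.ofSubtype τ) ^ w.support.length) x = x := by
  set σ := w.support.formPerm * Equiv.Perm.ofSubtype τ with hσ
  have hpos : 0 < w.support.length := List.length_pos_iff.mpr w.support_ne_nil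
  have hy : w.support[w.support.length - 1]'(by omega) = y := by
    rw [← List.getLast_eq_getElem]; exact w.getLast_support
  have h1 : (σ ^ (w.support.length - 1 + 1)) x = σ ((σ ^ (w.support.length - 1)) x) := by
    rw [pow_succ', Equiv.Perm.mul_apply]
  have h2 : w.support.length - 1 + 1 = w.support.length := by omega
  rw [h2] at h1
  rw [h1, psi_pow w hnd σ (fun i hi => psi_mem w τ hi) _ (by omega), hy, hσ,
    psi_mem w τ w.end_mem_support, formPerm_support_last w hnd]

lemma psi_le {x y : V} (p q : G.Path x y) (τp : Equiv.Perm ↥((p : G.Walk x y).support.toFinsetᶜ))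
    (τq : Equiv.Perm ↥((q : G.Walk x y).support.toFinsetᶜ))
    (h : psiMap G x y ⟨p, τp⟩ = psiMap G x y ⟨q, τq⟩) :
    (p : G.Walk x y).support.length ≤ (q : G.Walk x y).support.length := by
  by_contra hlt
  push_neg at hlt
  set σ := psiMap G x y ⟨p, τp⟩ with hσ
  have hndp : (p : G.Walk x y).support.Nodup := p.2.support_nodup
  have hndq : (q : G.Walk x y).support.Nodup := q.2.support_nodup
  have hposq : 0 < (q : G.Walk x y).support.length :=
    List.length_pos_iff.mpr (q : G.Walk x y).support_ne_nil
  have h1 : (σ ^ (q : G.Walk x y).support.length) x = x := by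
    rw [h]; exact psi_pow_len (q : G.Walk x y) hndq τq
  have h2 : (σ ^ (q : G.Walk x y).support.length) x
      = (p : G.Walk x y).support[(q : G.Walk x y).support.length]'hlt :=
    psi_pow (p : G.Walk x y) hndp σ (fun i hi => psi_mem _ τp hi) _ hlt
  have h3 : (p : G.Walk x y).support[(q : G.Walk x y).support.length]'hlt
      = (p : G.Walk x y).support[0]'(by omega) := by
    rw [← h2, h1, support_getElem_zero]
  have := hndp.getElem_inj_iff.mp h3
  omega

lemma psiMap_injective {x y : V} (hxy : x ≠ y) : Function.Injective (psiMap G x y) := by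
  rintro ⟨p, τp⟩ ⟨q, τq⟩ h
  have hndp : (p : G.Walk x y).support.Nodup := p.2.support_nodup
  have hndq : (q : G.Walk x y).support.Nodup := q.2.support_nodup
  have hlen : (p : G.Walk x y).support.length = (q : G.Walk x y).support.length :=
    le_antisymm (psi_le p q τp τq h) (psi_le q p τq τp h.symm)
  have hsupp : (p : G.Walk x y).support = (q : G.Walk x y).support := by
    apply List.ext_getElem hlen
    intro i h1 h2
    rw [← psi_pow (p : G.Walk x y) hndp (psiMap G x y ⟨p, τp⟩)
        (fun i hi => psi_mem _ τp hi) i h1,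
      ← psi_pow (q : G.Walk x y) hndq (psiMap G x y ⟨q, τq⟩)
        (fun i hi => psi_mem _ τq hi) i h2, h]
  have hpq : p = q := Subtype.ext (walk_eq_of_support_eq _ _ hsupp)
  subst hpq
  have hof : Equiv.Perm.ofSubtype τp = Equiv.Perm.ofSubtype τq :=
    mul_left_cancel h
  have hτ : τp = τq := by
    apply Equiv.ext
    intro j
    apply Subtype.ext
    have := congrArg (fun f : Equiv.Perm V => f ↑j) hof
    simpa [Equiv.Perm.ofSubtype_apply_coe] using this
  rw [hτ]

lemma mem_image_of_ne_zero [DecidableRel G.Adj] (K : Matrix V V ℝ)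
    (hadapt : ∀ u v : V, u ≠ v → K u v ≠ 0 → G.Adj u v) {x y : V} (hxy : x ≠ y)
    (σ : Equiv.Perm V)
    (hne0 : ∀ i : V, (K.updateCol y (Pi.single x 1)) (σ i) i ≠ 0) :
    σ ∈ Finset.image (psiMap G x y) Finset.univ := by
  have hσy : σ y = x := by
    have h := hne0 y
    rw [Matrix.updateCol_self] at h
    by_contra hne
    exact h (Pi.single_eq_of_ne hne 1)
  have hKfac : ∀ i, i ≠ y → K (σ i) i ≠ 0 := fun i hi => by
    have h := hne0 i
    rwa [Matrix.updateCol_ne hi] at h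
  have hσx : σ x ≠ x := fun h => hxy (σ.injective (h.trans hσy.symm))
  have hxsupp : x ∈ σ.support := Equiv.Perm.mem_support.mpr hσx
  set L := σ.toList x with hL
  have hnodup : L.Nodup := Equiv.Perm.nodup_toList σ x
  have hlenpos : 0 < L.length := Equiv.Perm.length_toList_pos_of_mem_support σ x hxsupp
  have hget : ∀ k (hk : k < L.length), L[k] = (σ ^ k) x := by
    intro k hk
    have := Equiv.Perm.getElem_toList σ x k hk
    simpa [List.get_eq_getElem] using this
  have hpown : (σ ^ L.length) x = x := by
    have h1 := Equiv.Perm.pow_mod_card_support_cycleOf_self_apply σ L.length x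
    rw [← Equiv.Perm.length_toList, Nat.mod_self, pow_zero] at h1
    rw [← h1]; rfl
  have hhead : L[0]'hlenpos = x := by rw [hget 0 hlenpos]; simp
  have hlast : L.getLast (List.ne_nil_of_length_pos hlenpos) = y := by
    apply σ.injective
    rw [List.getLast_eq_getElem, hget _ (by omega)]
    have hstep : σ ((σ ^ (L.length - 1)) x) = (σ ^ L.length) x := by
      have h1 : σ ((σ ^ (L.length - 1)) x) = (σ ^ (L.length - 1 + 1)) x := by
        rw [pow_succ', Equiv.Perm.mul_apply]
      rw [h1, Nat.sub_add_cancel hlenpos]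
    rw [hstep, hpown, hσy]
  have hy' : (σ ^ (L.length - 1)) x = y := by
    rw [← hget _ (by omega : L.length - 1 < L.length), ← List.getLast_eq_getElem (List.ne_nil_of_length_pos hlenpos), hlast]
  have hlen2 : 2 ≤ L.length := by
    by_contra h
    push_neg at h
    have h1 : L.length = 1 := by omega
    rw [h1] at hy'
    simp at hy'
    exact hxy hy'
  have hchain : L.Chain' G.Adj := by
    show List.IsChain G.Adj L
    rw [List.isChain_iff_getElem]
    intro i hi
    rw [hget i (by omega), hget (i + 1) (by omega)]
    have hu : (σ ^ i) x ≠ y := by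
      intro h
      have he : L[i]'(by omega) = L[L.length - 1]'(by omega) := by
        rw [hget i (by omega), hget _ (by omega : L.length - 1 < L.length), h, hy']
      have := hnodup.getElem_inj_iff.mp he
      omega
    have hsc : σ.SameCycle x ((σ ^ i) x) := ⟨(i : ℤ), by rw [zpow_natCast]⟩
    have hmemsupp : (σ ^ i) x ∈ σ.support := hsc.mem_support_iff.mp hxsupp
    have hne : σ ((σ ^ i) x) ≠ (σ ^ i) x := Equiv.Perm.mem_support.mp hmemsupp
    have hadj := hadapt _ _ hne (hKfac _ hu)
    have hstep : (σ ^ (i + 1)) x = σ ((σ ^ i) x) := by rw [pow_succ', Equiv.Perm.mul_apply]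
    rw [hstep]
    exact hadj.symm
  have hheadx : L.head (List.ne_nil_of_length_pos hlenpos) = x := by
    rw [List.head_eq_getElem_zero]; exact hhead
  obtain ⟨w, hwsupp⟩ := exists_walk_of_chain' L (List.ne_nil_of_length_pos hlenpos)
    hchain hheadx hlast
  have hwp : w.IsPath := (Walk.isPath_def w).mpr (hwsupp ▸ hnodup)
  have hiff : ∀ i : V, i ∈ L ↔ σ i ∈ L := by
    intro i
    rw [Equiv.Perm.mem_toList_iff, Equiv.Perm.mem_toList_iff]
    simp only [hxsupp, and_true]
    exact (Equiv.Perm.sameCycle_apply_right).symm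
  have hperm : ∀ i : V, i ∈ w.support.toFinsetᶜ ↔ σ i ∈ w.support.toFinsetᶜ := by
    intro i
    simp only [Finset.mem_compl, List.mem_toFinset, hwsupp]
    exact not_congr (hiff i)
  set τ : Equiv.Perm ↥(w.support.toFinsetᶜ) := σ.subtypePerm (fun i => (hperm i).symm) with hτ
  rw [Finset.mem_image]
  refine ⟨⟨⟨w, hwp⟩, τ⟩, Finset.mem_univ _, ?_⟩
  ext i
  show (w.support.formPerm * Equiv.Perm.ofSubtype τ) i = σ i
  by_cases hi : i ∈ w.support
  · rw [psi_mem w τ hi, hwsupp, hL, Equiv.Perm.formPerm_toList]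
    have hiL : i ∈ L := by rwa [hwsupp] at hi
    exact Equiv.Perm.SameCycle.cycleOf_apply (Equiv.Perm.mem_toList_iff.mp hiL).1
  · rw [psi_not_mem w τ hi]
    have hic : i ∈ w.support.toFinsetᶜ := by simp [hi]
    rw [Equiv.Perm.ofSubtype_apply_of_mem τ hic]
    rfl

lemma det_updateCol_eq_sum [DecidableRel G.Adj] (K : Matrix V V ℝ)
    (hadapt : ∀ u v : V, u ≠ v → K u v ≠ 0 → G.Adj u v) (x y : V) (hxy : x ≠ y) :
    (K.updateCol y (Pi.single x 1)).det
      = ∑ p : G.Path x y,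
          ((-1 : ℝ) ^ ((p : G.Walk x y).support.toFinset.card + 1)
            * (subm K (p : G.Walk x y).support.toFinsetᶜ (p : G.Walk x y).support.toFinsetᶜ).det
            * ((p : G.Walk x y).darts.map fun d => K d.toProd.2 d.toProd.1).prod) := by
  classical
  set N := K.updateCol y (Pi.single x 1) with hN
  have hdet : N.det = ∑ σ : Equiv.Perm V,
      ((Equiv.Perm.sign σ : ℤ) : ℝ) * ∏ i, N (σ i) i := Matrix.det_apply' N
  have hzero : ∀ σ ∈ (Finset.univ : Finset (Equiv.Perm V)),
      σ ∉ Finset.image (psiMap G x y) Finset.univ →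
      ((Equiv.Perm.sign σ : ℤ) : ℝ) * ∏ i, N (σ i) i = 0 := by
    intro σ _ hσnot
    by_contra hne0
    refine hσnot (mem_image_of_ne_zero K hadapt hxy σ ?_)
    intro i hi0
    have hp0 : ∏ j, N (σ j) j = 0 :=
      Finset.prod_eq_zero (f := fun j => N (σ j) j) (Finset.mem_univ i) hi0
    exact hne0 (by rw [hp0, mul_zero])
  calc N.det = ∑ σ ∈ Finset.image (psiMap G x y) Finset.univ,
        ((Equiv.Perm.sign σ : ℤ) : ℝ) * ∏ i, N (σ i) i := by
        rw [hdet]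
        exact (Finset.sum_subset (Finset.subset_univ _) hzero).symm
    _ = ∑ z : (Σ p : G.Path x y, Equiv.Perm ↥((p : G.Walk x y).support.toFinsetᶜ)),
        ((Equiv.Perm.sign (psiMap G x y z) : ℤ) : ℝ) * ∏ i, N ((psiMap G x y z) i) i :=
        Finset.sum_image (fun a _ b _ hab => psiMap_injective hxy hab)
    _ = ∑ p : G.Path x y, ∑ τ : Equiv.Perm ↥((p : G.Walk x y).support.toFinsetᶜ),
        ((Equiv.Perm.sign (psiMap G x y ⟨p, τ⟩) : ℤ) : ℝ) * ∏ i, N ((psiMap G x y ⟨p, τ⟩) i) i := by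
        rw [← Finset.univ_sigma_univ, Finset.sum_sigma]
    _ = ∑ p : G.Path x y,
          ((-1 : ℝ) ^ ((p : G.Walk x y).support.toFinset.card + 1)
            * (subm K (p : G.Walk x y).support.toFinsetᶜ (p : G.Walk x y).support.toFinsetᶜ).det
            * ((p : G.Walk x y).darts.map fun d => K d.toProd.2 d.toProd.1).prod) := by
        refine Finset.sum_congr rfl (fun p _ => ?_)
        exact sum_tau hxy K (p : G.Walk x y) p.2.support_nodup

theorem covariance_decomposition' {V : Type*} [Fintype V] [DecidableEq V]
    (S : Matrix V V ℝ) (hS : S.PosDef) (G : SimpleGraph V) [DecidableRel G.Adj]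
    (hadapt : ∀ u v : V, u ≠ v → S⁻¹ u v ≠ 0 → G.Adj u v) (x y : V) (hxy : x ≠ y) :
    S x y = ∑ p : G.Path x y,
      ((-1 : ℝ) ^ ((p : G.Walk x y).support.toFinset.card + 1) *
        ((subm S⁻¹ (p : G.Walk x y).support.toFinsetᶜ (p : G.Walk x y).support.toFinsetᶜ).det /
          S⁻¹.det) *
        ((p : G.Walk x y).darts.map fun d => S⁻¹ d.toProd.1 d.toProd.2).prod) := by
  classical
  have hdS : IsUnit S.det := isUnit_iff_ne_zero.mpr hS.det_pos.ne'
  have hdK : IsUnit (S⁻¹).det := S.isUnit_nonsing_inv_det hdS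
  have hherm : (S⁻¹).IsHermitian := hS.1.inv
  have hsym : ∀ a b : V, S⁻¹ a b = S⁻¹ b a := by
    intro a b
    have := hherm.apply a b
    simpa using this.symm
  have hKT : (S⁻¹)ᵀ = S⁻¹ := Matrix.ext (fun i j => by rw [Matrix.transpose_apply, hsym j i])
  have hadj : (S⁻¹).adjugate x y = ((S⁻¹).updateCol y (Pi.single x 1)).det := by
    rw [Matrix.adjugate_apply, ← Matrix.det_transpose, ← Matrix.updateCol_transpose, hKT]
  have hSxy : S x y = ((S⁻¹).det)⁻¹ * ((S⁻¹).updateCol y (Pi.single x 1)).det := by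
    conv_lhs => rw [← S.nonsing_inv_nonsing_inv hdS]
    rw [Matrix.inv_def, Matrix.smul_apply, smul_eq_mul, Ring.inverse_eq_inv', hadj]
  rw [hSxy, det_updateCol_eq_sum (S⁻¹) hadapt x y hxy, Finset.mul_sum]
  refine Finset.sum_congr rfl (fun p _ => ?_)
  have hmap : ((p : G.Walk x y).darts.map fun d => S⁻¹ d.toProd.2 d.toProd.1)
      = ((p : G.Walk x y).darts.map fun d => S⁻¹ d.toProd.1 d.toProd.2) :=
    List.map_congr_left (fun d _ => hsym _ _)
  rw [hmap]
  ring

end AuxJW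

/-- Covariance decomposition over a concentration graph (Jones–West). -/
theorem covariance_decomposition {V : Type*} [Fintype V] [DecidableEq V]
    (S : Matrix V V ℝ) (hS : S.PosDef) (G : SimpleGraph V) [DecidableRel G.Adj]
    (hadapt : Adapted S⁻¹ G) (x y : V) (hxy : x ≠ y) :
    S x y = ∑ p : G.Path x y, pathWeight S (p : G.Walk x y) := by
  unfold pathWeight
  exact covariance_decomposition' S hS G hadapt x y hxy
end

section
/- For every pair of distinct u,v ∈ V, the off-diagonal entry of the inflated correlation matrix factorizes as ϱ^V_uv = ρ_uv · √(IF_u · IF_v), where ρ_uv = σ_uv/√(σ_uu σ_vv) is the marginal correlation and IF_u, IF_v are the variance inflation factors of u and v. In the special case |V| = 2 this reduces to ϱ^{{u,v}}_uv = ρ_uv/(1 − ρ_uv²). -/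
open Matrix BigOperators Finset

variable {V : Type*} [Fintype V] [DecidableEq V]

section AuxiliaryLemmas

variable {V : Type*} [Fintype V] [DecidableEq V]

lemma posDef_diag_pos {S : Matrix V V ℝ} (hS : S.PosDef) (u : V) : 0 < S u u := by
  have h := hS.dotProduct_mulVec_pos (x := Pi.single u 1) (by
    intro h
    have h2 := congrFun h u
    simp at h2)
  simpa [Matrix.mulVec_single, dotProduct, Pi.single_apply] using h

lemma det_subm_univ (S : Matrix V V ℝ) :
    (subm S (Finset.univ : Finset V) Finset.univ).det = S.det := by
  let e : (↥(Finset.univ : Finset V)) ≃ V :=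
    Equiv.subtypeUnivEquiv (fun x => Finset.mem_univ x)
  have h : subm S Finset.univ Finset.univ = S.submatrix e e := rfl
  rw [h, Matrix.det_submatrix_equiv_self]

lemma det_subm_singleton (S : Matrix V V ℝ) (u : V) :
    (subm S ({u} : Finset V) {u}).det = S u u := by
  haveI : Subsingleton (↥({u} : Finset V)) :=
    ⟨fun x y => Subtype.ext
      ((Finset.mem_singleton.mp x.2).trans (Finset.mem_singleton.mp y.2).symm)⟩
  rw [Matrix.det_eq_elem_of_subsingleton _ ⟨u, Finset.mem_singleton_self u⟩]
  rfl

lemma det_update_eq_minor (S : Matrix V V ℝ) (u : V) :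
    (S.updateRow u (Pi.single u 1)).det = (subm S ({u}ᶜ : Finset V) {u}ᶜ).det := by
  classical
  set B := S.updateRow u (Pi.single u 1) with hB
  haveI : Unique {x : V // ¬ x ≠ u} :=
    ⟨⟨⟨u, by simp⟩⟩, fun x => Subtype.ext (not_not.mp x.2)⟩
  let e : {x : V // x ≠ u} ⊕ {x : V // ¬ x ≠ u} ≃ V := Equiv.sumCompl _
  have h1 : B.det = (B.submatrix e e).det :=
    (Matrix.det_submatrix_equiv_self e B).symm
  have h2 : B.submatrix e e =
      Matrix.fromBlocks (Matrix.of fun i j : {x : V // x ≠ u} => S i.1 j.1)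
        (Matrix.of fun (i : {x : V // x ≠ u}) (j : {x : V // ¬ x ≠ u}) => B i.1 j.1)
        0 1 := by
    ext i j
    rcases i with i | i <;> rcases j with j | j
    · simp [Matrix.fromBlocks, e, hB, Matrix.updateRow_apply, i.2]
    · simp [Matrix.fromBlocks, e]
    · have hi : i.1 = u := not_not.mp i.2
      simp [Matrix.fromBlocks, e, hB, hi, Matrix.updateRow_apply,
        Pi.single_apply, (Ne.symm j.2)]
    · have hi : i.1 = u := not_not.mp i.2
      have hj : j.1 = u := not_not.mp j.2
      have hij : i = j := Subtype.ext (hi.trans hj.symm)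
      simp [Matrix.fromBlocks, e, hB, hi, hj, hij, Matrix.updateRow_apply,
        Pi.single_apply, Matrix.one_apply]
  rw [h1, h2, Matrix.det_fromBlocks_zero₂₁, Matrix.det_one, mul_one]
  let e3 : (↥({u}ᶜ : Finset V)) ≃ {x : V // x ≠ u} :=
    Equiv.subtypeEquivRight (fun x => by simp)
  rw [← Matrix.det_submatrix_equiv_self e3]
  rfl

lemma inv_diag_eq (S : Matrix V V ℝ) (hdet : S.det ≠ 0) (u : V) :
    S⁻¹ u u = (subm S ({u}ᶜ : Finset V) {u}ᶜ).det / S.det := by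
  rw [Matrix.inv_def, Matrix.smul_apply, Matrix.adjugate_apply,
    det_update_eq_minor, Ring.inverse_eq_inv', smul_eq_mul]
  field_simp

lemma inflF_singleton_eq (S : Matrix V V ℝ) (hdet : S.det ≠ 0) (u : V) :
    inflF S {u} ({u}ᶜ : Finset V) = S u u * S⁻¹ u u := by
  have hminor : (subm S ({u}ᶜ : Finset V) {u}ᶜ).det = S⁻¹ u u * S.det := by
    rw [inv_diag_eq S hdet u]; field_simp
  rw [inflF, Finset.union_compl, det_subm_univ, det_subm_singleton, hminor]
  field_simp

end AuxiliaryLemmas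

/-- `ϱ^V_uv = ρ_uv √(IF_u · IF_v)`, and for `|V| = 2` (i.e. `{u,v} = V`)
this reduces to `ϱ_uv = ρ_uv/(1 − ρ_uv²)`. -/
theorem inflCorr_offdiag_factorization {V : Type*} [Fintype V] [DecidableEq V]
    (S : Matrix V V ℝ) (hS : S.PosDef) (u v : V) (huv : u ≠ v) :
    inflCorr S u v =
      (S u v / Real.sqrt (S u u * S v v)) * Real.sqrt (inflF S {u} {u}ᶜ * inflF S {v} {v}ᶜ) ∧
    (({u, v} : Finset V) = Finset.univ →
      inflCorr S u v =
        (S u v / Real.sqrt (S u u * S v v)) / (1 - (S u v / Real.sqrt (S u u * S v v)) ^ 2)) := by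
  have hdet : S.det ≠ 0 := hS.det_pos.ne'
  have hKu : 0 < S⁻¹ u u := posDef_diag_pos hS.inv u
  have hKv : 0 < S⁻¹ v v := posDef_diag_pos hS.inv v
  have hSu : 0 < S u u := posDef_diag_pos hS u
  have hSv : 0 < S v v := posDef_diag_pos hS v
  have hmain : inflCorr S u v =
      (S u v / Real.sqrt (S u u * S v v)) *
        Real.sqrt (inflF S {u} ({u}ᶜ : Finset V) * inflF S {v} ({v}ᶜ : Finset V)) := by
    rw [inflF_singleton_eq S hdet u, inflF_singleton_eq S hdet v]
    have h1 : Real.sqrt (S u u * S⁻¹ u u * (S v v * S⁻¹ v v))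
        = Real.sqrt (S u u) * Real.sqrt (S⁻¹ u u) *
          (Real.sqrt (S v v) * Real.sqrt (S⁻¹ v v)) := by
      rw [Real.sqrt_mul (by positivity), Real.sqrt_mul hSu.le, Real.sqrt_mul hSv.le]
    rw [h1, Real.sqrt_mul hSu.le]
    have h2 : Real.sqrt (S u u) ≠ 0 := by positivity
    have h3 : Real.sqrt (S v v) ≠ 0 := by positivity
    show Real.sqrt (S⁻¹ u u) * S u v * Real.sqrt (S⁻¹ v v) = _
    field_simp
  refine ⟨hmain, fun hUV => ?_⟩
  have hall : ∀ x : V, x = u ∨ x = v := fun x => by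
    have hx : x ∈ ({u, v} : Finset V) := hUV ▸ Finset.mem_univ x
    simpa using hx
  have hcu : ({u}ᶜ : Finset V) = {v} := by
    ext x
    simp only [Finset.mem_compl, Finset.mem_singleton]
    constructor
    · intro hx
      rcases hall x with h | h
      · exact absurd h hx
      · exact h
    · rintro rfl
      exact huv.symm
  have hcv : ({v}ᶜ : Finset V) = {u} := by
    ext x
    simp only [Finset.mem_compl, Finset.mem_singleton]
    constructor
    · intro hx
      rcases hall x with h | h
      · exact h
      · exact absurd h hx
    · rintro rfl
      exact huv
  have hKu' : S⁻¹ u u = S v v / S.det := by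
    rw [inv_diag_eq S hdet u, hcu, det_subm_singleton]
  have hKv' : S⁻¹ v v = S u u / S.det := by
    rw [inv_diag_eq S hdet v, hcv, det_subm_singleton]
  have hsym : S v u = S u v := by
    have := hS.1.apply v u
    simpa using this.symm
  let e : Fin 2 ≃ V :=
    { toFun := ![u, v]
      invFun := fun x => if x = u then 0 else 1
      left_inv := by
        intro i
        fin_cases i <;> simp [huv.symm]
      right_inv := by
        intro x
        rcases hall x with rfl | rfl <;> simp [huv.symm] }
  have hdet2 : S.det = S u u * S v v - S u v ^ 2 := by
    rw [← Matrix.det_submatrix_equiv_self e S, Matrix.det_fin_two]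
    simp only [Matrix.submatrix_apply]
    have e0 : e 0 = u := rfl
    have e1 : e 1 = v := rfl
    rw [e0, e1, hsym]
    ring
  have hd : 0 < S.det := hS.det_pos
  show Real.sqrt (S⁻¹ u u) * S u v * Real.sqrt (S⁻¹ v v) = _
  rw [hKu', hKv']
  set a := S u u with ha'
  set b := S v v with hb'
  set c := S u v with hc'
  set d := S.det with hd'
  have hsab : Real.sqrt (a * b) = Real.sqrt a * Real.sqrt b := Real.sqrt_mul hSu.le _
  have ha2 : Real.sqrt a ^ 2 = a := Real.sq_sqrt hSu.le
  have hb2 : Real.sqrt b ^ 2 = b := Real.sq_sqrt hSv.le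
  have hd2 : Real.sqrt d ^ 2 = d := Real.sq_sqrt hd.le
  have hsa : (0:ℝ) < Real.sqrt a := Real.sqrt_pos.mpr hSu
  have hsb : (0:ℝ) < Real.sqrt b := Real.sqrt_pos.mpr hSv
  have hsd : (0:ℝ) < Real.sqrt d := Real.sqrt_pos.mpr hd
  have hrho2 : 1 - (c / Real.sqrt (a * b)) ^ 2 = d / (a * b) := by
    rw [hsab, div_pow, mul_pow, ha2, hb2, hdet2]
    field_simp
  rw [Real.sqrt_div hSv.le, Real.sqrt_div hSu.le, hrho2, hsab]
  rw [← ha2, ← hb2, ← hd2]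
  field_simp
  simp only [Real.sqrt_sq hsa.le, Real.sqrt_sq hsb.le, Real.sqrt_sq hsd.le]
end

section
/- Partial covariance decomposition over an induced subgraph. Let K = Σ⁻¹ be the concentration matrix of X_V. If K is adapted to the graph G = (V,E), then for every A ⊆ V and every pair of distinct x,y ∈ A it holds that σ_{xy·Ā} = Σ_{π ∈ Π^A_xy} ω(π, Σ_{AA·Ā}), where the sum is over all paths between x and y whose vertices lie in A (equivalently, all paths in the induced subgraph G_A), and ω(π, Σ_{AA·Ā}) = (−1)^{|P|+1} (det K_{A∖P,A∖P} / det K_AA) ∏_{{u,v}∈E(π)} κ_uv with P = V(π). -/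
open Matrix BigOperators Finset

variable {V : Type*} [Fintype V] [DecidableEq V]

section Aux

variable {V : Type*} [Fintype V] [DecidableEq V]

@[simp] lemma subm_apply (M : Matrix V V ℝ) (A B : Finset V) (i : ↥A) (j : ↥B) :
    subm M A B i j = M i.1 j.1 := rfl

/-- Principal submatrices of positive definite matrices are positive definite. -/
lemma posDef_subm {M : Matrix V V ℝ} (hM : M.PosDef) (B : Finset V) :
    (subm M B B).PosDef := by
  rw [Matrix.posDef_iff_dotProduct_mulVec]
  constructor
  · exact hM.1.submatrix _
  · intro v hv
    set w : V → ℝ := fun u => if h : u ∈ B then v ⟨u, h⟩ else 0 with hw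
    have hwne : w ≠ 0 := by
      obtain ⟨i, hi⟩ := Function.ne_iff.1 hv
      intro h0
      apply hi
      have := congrFun h0 i.1
      simpa [hw, i.2] using this
    have key := hM.dotProduct_mulVec_pos hwne
    have inner : ∀ u : V, ∑ t : V, M u t * w t = ∑ t : ↥B, M u t.1 * v t := by
      intro u
      have h1 : ∑ t ∈ B, M u t * w t = ∑ t : V, M u t * w t :=
        Finset.sum_subset (Finset.subset_univ B) (fun t _ ht => by simp [hw, ht])
      rw [← h1, ← Finset.sum_coe_sort B (fun t => M u t * w t)]
      exact Finset.sum_congr rfl fun t _ => by simp [hw, t.2]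
    have houter : ∑ u : V, w u * ∑ t : V, M u t * w t
        = ∑ u : ↥B, v u * ∑ t : ↥B, M u.1 t.1 * v t := by
      have h1 : ∑ u ∈ B, w u * ∑ t : V, M u t * w t = ∑ u : V, w u * ∑ t : V, M u t * w t :=
        Finset.sum_subset (Finset.subset_univ B) (fun u _ hu => by simp [hw, hu])
      rw [← h1, ← Finset.sum_coe_sort B (fun u => w u * ∑ t : V, M u t * w t)]
      exact Finset.sum_congr rfl fun u _ => by rw [inner u.1]; simp [hw, u.2]
    have hdot : dotProduct (star v) (subm M B B *ᵥ v)
        = dotProduct (star w) (M *ᵥ w) := by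
      simp only [dotProduct, Matrix.mulVec, star_trivial, Pi.star_apply]
      simp only [subm_apply]
      exact houter.symm
    rw [hdot]
    exact key

lemma isUnit_det_subm {M : Matrix V V ℝ} (hM : M.PosDef) (B : Finset V) :
    IsUnit (subm M B B).det :=
  isUnit_iff_ne_zero.2 (ne_of_gt (posDef_subm hM B).det_pos)

lemma subm_mul (M N : Matrix V V ℝ) (A B C : Finset V) (i : ↥A) (j : ↥C) :
    (subm M A B * subm N B C) i j = ∑ u ∈ B, M i.1 u * N u j.1 := by
  rw [Matrix.mul_apply]
  exact Finset.sum_coe_sort B (fun u => M i.1 u * N u j.1)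

/-- Schur complement: the partial covariance is the inverse of the concentration
submatrix. -/
lemma pcov_eq (S : Matrix V V ℝ) (hS : S.PosDef) (A : Finset V) :
    pcov S A = (subm S⁻¹ A A)⁻¹ := by
  have hSdet : IsUnit S.det := isUnit_iff_ne_zero.2 (ne_of_gt hS.det_pos)
  have hKS : S⁻¹ * S = 1 := Matrix.nonsing_inv_mul S hSdet
  have hAc : IsUnit (subm S Aᶜ Aᶜ).det := isUnit_det_subm hS Aᶜ
  symm
  apply Matrix.inv_eq_right_inv
  have hone : subm S⁻¹ A A * subm S A A + subm S⁻¹ A Aᶜ * subm S Aᶜ A = 1 := by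
    ext i j
    rw [Matrix.add_apply, subm_mul, subm_mul, Finset.sum_add_sum_compl]
    have h1 := congrFun (congrFun hKS i.1) j.1
    rw [Matrix.mul_apply] at h1
    rw [h1, Matrix.one_apply, Matrix.one_apply]
    exact if_congr Subtype.ext_iff.symm rfl rfl
  have hzero : subm S⁻¹ A A * subm S A Aᶜ + subm S⁻¹ A Aᶜ * subm S Aᶜ Aᶜ = 0 := by
    ext i j
    rw [Matrix.add_apply, subm_mul, subm_mul, Finset.sum_add_sum_compl]
    have h1 := congrFun (congrFun hKS i.1) j.1
    rw [Matrix.mul_apply] at h1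
    rw [h1, Matrix.one_apply, Matrix.zero_apply]
    have : i.1 ≠ j.1 := by
      intro h
      exact (Finset.mem_compl.1 j.2) (h ▸ i.2)
    simp [this]
  have hzero' : subm S⁻¹ A A * subm S A Aᶜ = -(subm S⁻¹ A Aᶜ * subm S Aᶜ Aᶜ) :=
    eq_neg_of_add_eq_zero_left hzero
  show subm S⁻¹ A A * pcovOn S A Aᶜ = 1
  unfold pcovOn
  rw [Matrix.mul_sub, show subm S⁻¹ A A * (subm S A Aᶜ * (subm S Aᶜ Aᶜ)⁻¹ * subm S Aᶜ A)
      = subm S⁻¹ A A * subm S A Aᶜ * (subm S Aᶜ Aᶜ)⁻¹ * subm S Aᶜ A by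
        rw [Matrix.mul_assoc, Matrix.mul_assoc, Matrix.mul_assoc],
    hzero', Matrix.neg_mul, Matrix.neg_mul, Matrix.mul_assoc (subm S⁻¹ A Aᶜ),
    Matrix.mul_assoc (subm S⁻¹ A Aᶜ), Matrix.mul_nonsing_inv _ hAc, Matrix.one_mul,
    sub_neg_eq_add, hone]

/-- Splitting a sum over `↥A` into the term at `x` and a sum over `↥(A.erase x)`. -/
lemma sum_split (A : Finset V) {x : V} (hx : x ∈ A) (f : ↥A → ℝ) :
    ∑ w : ↥A, f w = f ⟨x, hx⟩ +
      ∑ u : ↥(A.erase x), f ⟨u.1, Finset.mem_of_mem_erase u.2⟩ := by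
  classical
  set g : V → ℝ := fun a => if h : a ∈ A then f ⟨a, h⟩ else 0 with hg
  have hA : ∑ w : ↥A, f w = ∑ a ∈ A, g a := by
    rw [← Finset.sum_coe_sort A g]
    exact Finset.sum_congr rfl fun w _ => by simp [hg, w.2]
  have hB : ∑ u : ↥(A.erase x), f ⟨u.1, Finset.mem_of_mem_erase u.2⟩
      = ∑ a ∈ A.erase x, g a := by
    rw [← Finset.sum_coe_sort (A.erase x) g]
    exact Finset.sum_congr rfl fun u _ => by simp [hg, Finset.mem_of_mem_erase u.2]
  rw [hA, hB, ← Finset.sum_erase_add A g hx]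
  have : g x = f ⟨x, hx⟩ := by simp [hg, hx]
  rw [this]
  ring

/-- Determinant expansion by the Schur complement on one removed vertex. -/
lemma det_split (K : Matrix V V ℝ) (A : Finset V) (x : V) (hx : x ∈ A)
    (hN : IsUnit (subm K (A.erase x) (A.erase x)).det) :
    (subm K A A).det =
      (K x x - ∑ v : ↥(A.erase x), K x v.1 *
          ∑ u : ↥(A.erase x), (subm K (A.erase x) (A.erase x))⁻¹ v u * K u.1 x) *
        (subm K (A.erase x) (A.erase x)).det := by
  classical
  set B := A.erase x with hB
  set N := subm K B B with hNdef
  haveI : Invertible N := N.invertibleOfIsUnitDet hN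
  set e : ↥A ≃ ↥B ⊕ Unit :=
    { toFun := fun a => if h : a.1 = x then Sum.inr () else
        Sum.inl ⟨a.1, Finset.mem_erase.2 ⟨h, a.2⟩⟩
      invFun := Sum.elim (fun u => ⟨u.1, Finset.mem_of_mem_erase u.2⟩) (fun _ => ⟨x, hx⟩)
      left_inv := by
        intro a
        by_cases h : a.1 = x
        · simp only [dif_pos h, Sum.elim_inr]
          exact Subtype.ext h.symm
        · simp only [dif_neg h, Sum.elim_inl]
      right_inv := by
        rintro (u | u)
        · simp only [Sum.elim_inl]
          have : u.1 ≠ x := (Finset.mem_erase.1 u.2).1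
          exact dif_neg this
        · rcases u
          simp } with he
  have hMre : subm K A A =
      (Matrix.fromBlocks N (Matrix.of fun (u : ↥B) (_ : Unit) => K u.1 x)
        (Matrix.of fun (_ : Unit) (v : ↥B) => K x v.1)
        (Matrix.of fun (_ : Unit) (_ : Unit) => K x x)).submatrix e e := by
    ext a b
    rw [Matrix.submatrix_apply]
    by_cases ha : a.1 = x <;> by_cases hb : b.1 = x <;>
      simp [he, ha, hb, hNdef]
  rw [hMre, Matrix.det_submatrix_equiv_self e, Matrix.det_fromBlocks₁₁,
    Matrix.invOf_eq_nonsing_inv]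
  have hdet1 : ∀ X : Matrix Unit Unit ℝ, X.det = X default default := fun X =>
    Matrix.det_unique X
  rw [hdet1]
  have hentry :
      (Matrix.of (fun (_ : Unit) (_ : Unit) => K x x) -
        Matrix.of (fun (_ : Unit) (v : ↥B) => K x v.1) * N⁻¹ *
          Matrix.of (fun (u : ↥B) (_ : Unit) => K u.1 x)) default default
      = K x x - ∑ v : ↥B, K x v.1 * ∑ u : ↥B, N⁻¹ v u * K u.1 x := by
    rw [Matrix.sub_apply, Matrix.mul_apply]
    congr 1
    simp_rw [Matrix.mul_apply, Matrix.of_apply, Finset.sum_mul]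
    rw [Finset.sum_comm]
    apply Finset.sum_congr rfl
    intro u _
    rw [Finset.mul_sum]
    apply Finset.sum_congr rfl
    intro j _
    ring
  rw [hentry]
  ring

end Aux
section Inv

variable {V : Type*} [Fintype V] [DecidableEq V]

/-- Inverse entries on row `x` via the matrix with `x` removed. -/
lemma inv_entries (K : Matrix V V ℝ) (A : Finset V) (x : V) (hx : x ∈ A)
    (hM : IsUnit (subm K A A).det) (hN : IsUnit (subm K (A.erase x) (A.erase x)).det) :
    (subm K A A)⁻¹ ⟨x, hx⟩ ⟨x, hx⟩ =
        (subm K (A.erase x) (A.erase x)).det / (subm K A A).det ∧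
      ∀ (y : V) (hy : y ∈ A) (hyx : y ≠ x),
        (subm K A A)⁻¹ ⟨x, hx⟩ ⟨y, hy⟩ =
          -((subm K (A.erase x) (A.erase x)).det / (subm K A A).det) *
            ∑ v : ↥(A.erase x), K x v.1 *
              (subm K (A.erase x) (A.erase x))⁻¹ v ⟨y, Finset.mem_erase.2 ⟨hyx, hy⟩⟩ := by
  classical
  have hdet := det_split K A x hx hN
  set B := A.erase x with hB
  set M := subm K A A with hMdef
  set N := subm K B B with hNdef
  set J := M⁻¹ with hJdef
  set P := N⁻¹ with hPdef
  have hMdet0 : M.det ≠ 0 := hM.ne_zero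
  have hNdet0 : N.det ≠ 0 := hN.ne_zero
  have hMJ : M * J = 1 := Matrix.mul_nonsing_inv _ hM
  have hPN : P * N = 1 := Matrix.nonsing_inv_mul _ hN
  set x' : ↥A := ⟨x, hx⟩ with hx'
  have row : ∀ a b : ↥A,
      M a x' * J x' b +
        ∑ u : ↥B, M a ⟨u.1, Finset.mem_of_mem_erase u.2⟩ *
          J ⟨u.1, Finset.mem_of_mem_erase u.2⟩ b
      = if a = b then 1 else 0 := by
    intro a b
    have h0 := congrFun (congrFun hMJ a) b
    rw [Matrix.mul_apply, sum_split A hx (fun w => M a w * J w b), Matrix.one_apply] at h0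
    exact h0
  set c : ↥B → ℝ := fun v => ∑ u : ↥B,
    P v u * M ⟨u.1, Finset.mem_of_mem_erase u.2⟩ x' with hc
  have hcol : ∀ (v : ↥B) (b : ↥A),
      J ⟨v.1, Finset.mem_of_mem_erase v.2⟩ b =
        (∑ u : ↥B, P v u *
          if (⟨u.1, Finset.mem_of_mem_erase u.2⟩ : ↥A) = b then (1:ℝ) else 0)
          - c v * J x' b := by
    intro v b
    have hsum : ∑ u : ↥B, P v u *
          (M ⟨u.1, Finset.mem_of_mem_erase u.2⟩ x' * J x' b +
            ∑ w : ↥B, M ⟨u.1, Finset.mem_of_mem_erase u.2⟩ ⟨w.1, Finset.mem_of_mem_erase w.2⟩ *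
              J ⟨w.1, Finset.mem_of_mem_erase w.2⟩ b)
        = ∑ u : ↥B, P v u *
            (if (⟨u.1, Finset.mem_of_mem_erase u.2⟩ : ↥A) = b then (1:ℝ) else 0) :=
      Finset.sum_congr rfl fun u _ => by rw [row ⟨u.1, Finset.mem_of_mem_erase u.2⟩ b]
    have e1 : ∑ u : ↥B, P v u *
          (M ⟨u.1, Finset.mem_of_mem_erase u.2⟩ x' * J x' b +
            ∑ w : ↥B, M ⟨u.1, Finset.mem_of_mem_erase u.2⟩ ⟨w.1, Finset.mem_of_mem_erase w.2⟩ *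
              J ⟨w.1, Finset.mem_of_mem_erase w.2⟩ b)
        = c v * J x' b + J ⟨v.1, Finset.mem_of_mem_erase v.2⟩ b := by
      simp_rw [mul_add]
      rw [Finset.sum_add_distrib]
      congr 1
      · rw [hc, Finset.sum_mul]
        exact Finset.sum_congr rfl fun u _ => (mul_assoc _ _ _).symm
      · calc ∑ u : ↥B, P v u *
              ∑ w : ↥B, M ⟨u.1, Finset.mem_of_mem_erase u.2⟩ ⟨w.1, Finset.mem_of_mem_erase w.2⟩ *
                J ⟨w.1, Finset.mem_of_mem_erase w.2⟩ b
            = ∑ u : ↥B, ∑ w : ↥B, P v u * N u w * J ⟨w.1, Finset.mem_of_mem_erase w.2⟩ b := by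
              apply Finset.sum_congr rfl
              intro u _
              rw [Finset.mul_sum]
              apply Finset.sum_congr rfl
              intro w _
              show P v u * (N u w * J _ b) = P v u * N u w * J _ b
              ring
          _ = ∑ w : ↥B, ∑ u : ↥B, P v u * N u w * J ⟨w.1, Finset.mem_of_mem_erase w.2⟩ b :=
              Finset.sum_comm
          _ = ∑ w : ↥B, (∑ u : ↥B, P v u * N u w) * J ⟨w.1, Finset.mem_of_mem_erase w.2⟩ b :=
              Finset.sum_congr rfl fun w _ => (Finset.sum_mul _ _ _).symm
          _ = ∑ w : ↥B, (if v = w then (1:ℝ) else 0) * J ⟨w.1, Finset.mem_of_mem_erase w.2⟩ b := by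
              apply Finset.sum_congr rfl
              intro w _
              have h2 := congrFun (congrFun hPN v) w
              rw [Matrix.mul_apply, Matrix.one_apply] at h2
              rw [h2]
          _ = J ⟨v.1, Finset.mem_of_mem_erase v.2⟩ b := by simp
    rw [e1] at hsum
    linarith [hsum]
  have hcolx : ∀ v : ↥B, J ⟨v.1, Finset.mem_of_mem_erase v.2⟩ x' = -(c v * J x' x') := by
    intro v
    rw [hcol v x']
    have hzero : ∀ u : ↥B,
        (if (⟨u.1, Finset.mem_of_mem_erase u.2⟩ : ↥A) = x' then (1:ℝ) else 0) = 0 := by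
      intro u
      rw [if_neg]
      intro h
      exact (Finset.mem_erase.1 u.2).1 (Subtype.ext_iff.1 h)
    simp only [hzero, mul_zero, Finset.sum_const_zero]
    ring
  set T : ℝ := ∑ u : ↥B, M x' ⟨u.1, Finset.mem_of_mem_erase u.2⟩ * c u with hT
  set s : ℝ := M x' x' - T with hs
  have hdet' : M.det = s * N.det := hdet
  have hs0 : s ≠ 0 := by
    intro h
    rw [hdet', h, zero_mul] at hMdet0
    exact hMdet0 rfl
  -- diagonal entry
  have hdiag : J x' x' = N.det / M.det := by
    have hd := row x' x'
    rw [if_pos rfl] at hd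
    have hrw : ∑ u : ↥B, M x' ⟨u.1, Finset.mem_of_mem_erase u.2⟩ *
          J ⟨u.1, Finset.mem_of_mem_erase u.2⟩ x'
        = -(T * J x' x') := by
      calc ∑ u : ↥B, M x' ⟨u.1, Finset.mem_of_mem_erase u.2⟩ *
              J ⟨u.1, Finset.mem_of_mem_erase u.2⟩ x'
          = ∑ u : ↥B, -(M x' ⟨u.1, Finset.mem_of_mem_erase u.2⟩ * c u * J x' x') := by
            apply Finset.sum_congr rfl
            intro u _
            rw [hcolx u]
            ring
        _ = -∑ u : ↥B, M x' ⟨u.1, Finset.mem_of_mem_erase u.2⟩ * c u * J x' x' :=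
            Finset.sum_neg_distrib _
        _ = -(T * J x' x') := by rw [hT, Finset.sum_mul]
    rw [hrw] at hd
    have hsj : s * J x' x' = 1 := by rw [hs]; ring_nf; linarith [hd]
    have h1 : J x' x' = 1 / s := by
      rw [eq_div_iff hs0]
      linear_combination hsj
    rw [h1, hdet']
    field_simp
  refine ⟨hdiag, ?_⟩
  intro y hy hyx
  set y' : ↥A := ⟨y, hy⟩ with hy'
  set y'' : ↥B := ⟨y, Finset.mem_erase.2 ⟨hyx, hy⟩⟩ with hy''
  have hcoly : ∀ v : ↥B, J ⟨v.1, Finset.mem_of_mem_erase v.2⟩ y' = P v y'' - c v * J x' y' := by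
    intro v
    rw [hcol v y']
    congr 1
    have hiff : ∀ u : ↥B,
        ((⟨u.1, Finset.mem_of_mem_erase u.2⟩ : ↥A) = y') = (u = y'') := by
      intro u
      apply propext
      constructor
      · intro h
        have h' : u.1 = y := congrArg Subtype.val h
        exact Subtype.ext h'
      · intro h
        have h' : u.1 = y := congrArg Subtype.val h
        exact Subtype.ext h'
    simp only [hiff, mul_ite, mul_one, mul_zero, Finset.sum_ite_eq', Finset.mem_univ, if_true]
  have hd := row x' y'
  have hxy' : x' ≠ y' := by
    intro h
    exact hyx (Subtype.ext_iff.1 h).symm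
  rw [if_neg hxy'] at hd
  set R : ℝ := ∑ v : ↥B, M x' ⟨v.1, Finset.mem_of_mem_erase v.2⟩ * P v y'' with hR
  have hrw : ∑ v : ↥B, M x' ⟨v.1, Finset.mem_of_mem_erase v.2⟩ *
        J ⟨v.1, Finset.mem_of_mem_erase v.2⟩ y'
      = R - T * J x' y' := by
    calc ∑ v : ↥B, M x' ⟨v.1, Finset.mem_of_mem_erase v.2⟩ *
            J ⟨v.1, Finset.mem_of_mem_erase v.2⟩ y'
        = ∑ v : ↥B, (M x' ⟨v.1, Finset.mem_of_mem_erase v.2⟩ * P v y''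
            - M x' ⟨v.1, Finset.mem_of_mem_erase v.2⟩ * c v * J x' y') := by
          apply Finset.sum_congr rfl
          intro v _
          rw [hcoly v]
          ring
      _ = R - ∑ v : ↥B, M x' ⟨v.1, Finset.mem_of_mem_erase v.2⟩ * c v * J x' y' := by
          rw [Finset.sum_sub_distrib, hR]
      _ = R - T * J x' y' := by rw [hT, Finset.sum_mul]
  rw [hrw] at hd
  -- hd : M x' x' * J x' y' + (R - T * J x' y') = 0, so s * J x' y' = -R
  have hsj : s * J x' y' = -R := by rw [hs]; ring_nf; linarith [hd]
  have hgoal : J x' y' = -(N.det / M.det) * R := by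
    have h2 : J x' y' = -R / s := by
      rw [eq_div_iff hs0]
      linear_combination hsj
    rw [h2, hdet']
    field_simp
  exact hgoal

end Inv
section Key

variable {V : Type*} [Fintype V] [DecidableEq V]

/-- The auxiliary path weight `(∏ (−κ_uv)) · det K_{A∖P} / det K_AA`. -/
noncomputable def pw (K : Matrix V V ℝ) (A : Finset V) {G : SimpleGraph V} {x y : V}
    (p : G.Walk x y) : ℝ :=
  (p.darts.map fun d => -(K d.toProd.1 d.toProd.2)).prod *
    ((subm K (A \ p.support.toFinset) (A \ p.support.toFinset)).det / (subm K A A).det)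

lemma list_prod_map_neg {α : Type*} (l : List α) (f : α → ℝ) :
    (l.map fun a => -(f a)).prod = (-1 : ℝ) ^ l.length * (l.map f).prod := by
  induction l with
  | nil => simp
  | cons a t ih =>
    simp only [List.map_cons, List.prod_cons, List.length_cons, ih, pow_succ]
    ring

lemma pw_eq (S : Matrix V V ℝ) (A : Finset V) {G : SimpleGraph V} {x y : V} (p : G.Walk x y)
    (hp : p.IsPath) : partialPathWeight S A p = pw (S⁻¹) A p := by
  unfold partialPathWeight pw
  have hcard : p.support.toFinset.card = p.length + 1 := by
    rw [List.toFinset_card_of_nodup hp.support_nodup, SimpleGraph.Walk.length_support]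
  rw [hcard, list_prod_map_neg, SimpleGraph.Walk.length_darts, pow_succ, pow_succ]
  ring

/-- Strip the first dart of a walk. -/
def unconsD {V : Type*} {G : SimpleGraph V} {y : V} :
    {x : V} → G.Walk x y → (v : V) × G.Walk v y
  | _, SimpleGraph.Walk.nil => ⟨y, SimpleGraph.Walk.nil⟩
  | _, SimpleGraph.Walk.cons _ q => ⟨_, q⟩

lemma unconsD_isPath {V : Type*} {G : SimpleGraph V} {y x : V} (w : G.Walk x y)
    (hw : w.IsPath) : (unconsD w).2.IsPath := by
  cases w with
  | nil => exact hw
  | cons h q => exact hw.of_cons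

/-- Key lemma: path expansion of the entries of the inverse of a principal submatrix. -/
lemma key_expansion (K : Matrix V V ℝ) (hK : ∀ B : Finset V, IsUnit (subm K B B).det)
    (G : SimpleGraph V) [DecidableRel G.Adj]
    (hadapt : ∀ u v : V, u ≠ v → K u v ≠ 0 → G.Adj u v) :
    ∀ (n : ℕ) (A : Finset V), A.card = n → ∀ (x y : V) (hx : x ∈ A) (hy : y ∈ A),
      (subm K A A)⁻¹ ⟨x, hx⟩ ⟨y, hy⟩ =
        ∑ p ∈ Finset.univ.filter
            (fun p : G.Path x y => (p : G.Walk x y).support.toFinset ⊆ A),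
          pw K A (p : G.Walk x y) := by
  intro n
  induction n with
  | zero =>
    intro A hA x y hx hy
    rw [Finset.card_eq_zero] at hA
    subst hA
    exact absurd hx (Finset.notMem_empty x)
  | succ n ih =>
    intro A hA x y hx hy
    by_cases hxy : x = y
    · subst hxy
      have hfilter : Finset.univ.filter
          (fun p : G.Path x x => (p : G.Walk x x).support.toFinset ⊆ A)
          = {(SimpleGraph.Path.nil : G.Path x x)} := by
        ext p
        simp only [Finset.mem_filter, Finset.mem_univ, true_and, Finset.mem_singleton]
        constructor
        · intro _
          exact SimpleGraph.Path.loop_eq p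
        · intro hp
          rw [hp]
          show (SimpleGraph.Walk.nil : G.Walk x x).support.toFinset ⊆ A
          simp [SimpleGraph.Walk.support_nil, hx]
      rw [hfilter, Finset.sum_singleton]
      rw [(inv_entries K A x hx (hK A) (hK (A.erase x))).1]
      show _ = pw K A (SimpleGraph.Walk.nil : G.Walk x x)
      unfold pw
      have hxs : A \ (SimpleGraph.Walk.nil : G.Walk x x).support.toFinset = A.erase x := by
        rw [SimpleGraph.Walk.support_nil, Finset.erase_eq]
        norm_num
      rw [hxs, SimpleGraph.Walk.darts_nil]
      simp
    · -- x ≠ y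
      have hyx : y ≠ x := Ne.symm hxy
      have hyB : y ∈ A.erase x := Finset.mem_erase.2 ⟨hyx, hy⟩
      have hBcard : (A.erase x).card = n := by
        rw [Finset.card_erase_of_mem hx, hA]
        rfl
      have hoff := (inv_entries K A x hx (hK A) (hK (A.erase x))).2 y hy hyx
      rw [hoff]
      have hdM : (subm K A A).det ≠ 0 := (hK A).ne_zero
      have hdN : (subm K (A.erase x) (A.erase x)).det ≠ 0 := (hK (A.erase x)).ne_zero
      have hsdiff : ∀ P : Finset V, A \ insert x P = (A.erase x) \ P := by
        intro P
        ext a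
        simp only [Finset.mem_sdiff, Finset.mem_insert, Finset.mem_erase]
        tauto
      have hstep1 : ∀ v : ↥(A.erase x),
          (subm K (A.erase x) (A.erase x))⁻¹ v ⟨y, hyB⟩
          = ∑ q ∈ Finset.univ.filter
              (fun q : G.Path v.1 y => (q : G.Walk v.1 y).support.toFinset ⊆ A.erase x),
            pw K (A.erase x) (q : G.Walk v.1 y) := fun v =>
        ih (A.erase x) hBcard v.1 y v.2 hyB
      set F : V → ℝ := fun v =>
        ∑ q ∈ Finset.univ.filter
            (fun q : G.Path v y => (q : G.Walk v y).support.toFinset ⊆ A.erase x),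
          -(K x v) * ((subm K (A.erase x) (A.erase x)).det / (subm K A A).det) *
            pw K (A.erase x) (q : G.Walk v y) with hF
      have hstep2 : -((subm K (A.erase x) (A.erase x)).det / (subm K A A).det) *
          ∑ v : ↥(A.erase x), K x v.1 *
            (subm K (A.erase x) (A.erase x))⁻¹ v ⟨y, hyB⟩
          = ∑ v : ↥(A.erase x), F v.1 := by
        rw [Finset.mul_sum]
        apply Finset.sum_congr rfl
        intro v _
        rw [hstep1 v]
        simp only [hF, Finset.mul_sum]
        apply Finset.sum_congr rfl
        intro q _
        ring
      rw [hstep2, Finset.sum_coe_sort (A.erase x) F]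
      have hne : ∀ v ∈ A.erase x, F v ≠ 0 → G.Adj x v := by
        intro v hvB hFv
        by_contra hnadj
        apply hFv
        have hxv : x ≠ v := fun h => (Finset.mem_erase.1 hvB).1 h.symm
        have hK0 : K x v = 0 := by
          by_contra hK0
          exact hnadj (hadapt x v hxv hK0)
        simp only [hF]
        apply Finset.sum_eq_zero
        intro q _
        rw [hK0]
        ring
      rw [← Finset.sum_filter_of_ne hne]
      rw [Finset.sum_sigma' ((A.erase x).filter (fun v => G.Adj x v))
        (fun v => Finset.univ.filter
          (fun q : G.Path v y => (q : G.Walk v y).support.toFinset ⊆ A.erase x))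
        (fun v q => -(K x v) * ((subm K (A.erase x) (A.erase x)).det / (subm K A A).det) *
          pw K (A.erase x) (q : G.Walk v y))]
      refine Finset.sum_bij'
        (i := fun (z : Σ v : V, G.Path v y) (hz) =>
          (⟨SimpleGraph.Walk.cons ((Finset.mem_filter.1 (Finset.mem_sigma.1 hz).1).2)
              (z.2 : G.Walk z.1 y), by
            rw [SimpleGraph.Walk.cons_isPath_iff]
            refine ⟨z.2.2, fun hxs => ?_⟩
            exact Finset.notMem_erase x A
              ((Finset.mem_filter.1 (Finset.mem_sigma.1 hz).2).2
                (List.mem_toFinset.2 hxs))⟩ : G.Path x y))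
        (j := fun (p : G.Path x y) (hp) =>
          ⟨(unconsD (p : G.Walk x y)).1, ⟨(unconsD (p : G.Walk x y)).2,
            unconsD_isPath (p : G.Walk x y) p.2⟩⟩)
        ?_ ?_ ?_ ?_ ?_
      · -- hi : i z ∈ path filter
        intro z hz
        simp only [Finset.mem_filter, Finset.mem_univ, true_and]
        show (SimpleGraph.Walk.cons _ (z.2 : G.Walk z.1 y)).support.toFinset ⊆ A
        rw [SimpleGraph.Walk.support_cons, List.toFinset_cons]
        rw [Finset.insert_subset_iff]
        exact ⟨hx, Finset.Subset.trans
          ((Finset.mem_filter.1 (Finset.mem_sigma.1 hz).2).2)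
          (Finset.erase_subset x A)⟩
      · -- hj : j p ∈ sigma
        rintro ⟨w, hw⟩ hp
        cases w with
        | nil => exact absurd rfl hxy
        | cons h q =>
          rw [Finset.mem_filter] at hp
          have hsub := hp.2
          rw [SimpleGraph.Walk.cons_isPath_iff] at hw
          rw [Finset.mem_sigma]
          have hsubq : q.support.toFinset ⊆ A.erase x := by
            intro u hu
            rw [Finset.mem_erase]
            constructor
            · intro hux
              exact hw.2 (hux ▸ List.mem_toFinset.1 hu)
            · apply hsub
              show u ∈ (SimpleGraph.Walk.cons h q).support.toFinset
              rw [SimpleGraph.Walk.support_cons, List.toFinset_cons]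
              exact Finset.mem_insert_of_mem hu
          constructor
          · rw [Finset.mem_filter]
            exact ⟨hsubq (List.mem_toFinset.2 q.start_mem_support), h⟩
          · rw [Finset.mem_filter]
            exact ⟨Finset.mem_univ _, hsubq⟩
      · -- left inverse : j (i z) = z
        rintro ⟨v, q⟩ hz
        rfl
      · -- right inverse : i (j p) = p
        rintro ⟨w, hw⟩ hp
        cases w with
        | nil => exact absurd rfl hxy
        | cons h q => rfl
      · -- weights agree
        rintro ⟨v, q⟩ hz
        show -(K x v) * _ * pw K (A.erase x) (q : G.Walk v y)
          = pw K A (SimpleGraph.Walk.cons _ (q : G.Walk v y))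
        unfold pw
        rw [SimpleGraph.Walk.darts_cons, List.map_cons, List.prod_cons,
          SimpleGraph.Walk.support_cons, List.toFinset_cons, hsdiff]
        field_simp

end Key
/-- partial covariance decomposition over an induced subgraph:
`σ_{xy·Ā} = Σ_{π ∈ Π^A_xy} ω(π, Σ_{AA·Ā})`. -/
theorem partial_covariance_decomposition {V : Type*} [Fintype V] [DecidableEq V]
    (S : Matrix V V ℝ) (hS : S.PosDef) (G : SimpleGraph V) [DecidableRel G.Adj]
    (hadapt : Adapted S⁻¹ G) (A : Finset V) (x y : V) (hx : x ∈ A) (hy : y ∈ A)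
    (hxy : x ≠ y) :
    pcov S A ⟨x, hx⟩ ⟨y, hy⟩ =
      ∑ p ∈ Finset.univ.filter
        (fun p : G.Path x y => (p : G.Walk x y).support.toFinset ⊆ A),
        partialPathWeight S A (p : G.Walk x y) := by
  classical
  have hKpd : (S⁻¹).PosDef := hS.inv
  have hall : ∀ B : Finset V, IsUnit (subm (S⁻¹) B B).det := fun B => isUnit_det_subm hKpd B
  rw [pcov_eq S hS A, key_expansion (S⁻¹) hall G hadapt A.card A rfl x y hx hy]
  apply Finset.sum_congr rfl
  intro p _
  exact (pw_eq S A (p : G.Walk x y) p.2).symm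
end

section
/- Factorization of a covariance path weight into a partial covariance weight and an inflation factor. If K = Σ⁻¹ is adapted to G = (V,E), then for any path π in G and any subset A ⊆ V with V(π) ⊆ A, writing P = V(π), it holds that ω(π,Σ) = ω(π, Σ_{AA·Ā}) × IF_P^{Ā}. Consequently sgn(ω(π,Σ)) = sgn(ω(π, Σ_{AA·Ā})) and |ω(π,Σ)| ≥ |ω(π, Σ_{AA·Ā})|, and for nonzero weights the inequality is an equality if and only if IF_P^{Ā} = 1. -/
open Matrix BigOperators Finset

variable {V : Type*} [Fintype V] [DecidableEq V]

section Aux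

variable {m n : Type*} [Fintype m] [Fintype n] [DecidableEq m] [DecidableEq n]

/-- A principal submatrix along an injective map of a positive definite matrix is
positive definite. -/
lemma posDef_submatrix_inj {M : Matrix n n ℝ} (hM : M.PosDef) (f : m → n)
    (hf : Function.Injective f) : (M.submatrix f f).PosDef := by
  classical
  have key : ∀ (x : m → ℝ) (g : n → ℝ),
      ∑ u, Function.extend f x 0 u * g u = ∑ i, x i * g (f i) := by
    intro x g
    rw [show (Finset.univ : Finset n) = Finset.univ.image f ∪ (Finset.univ.image f)ᶜ by
      simp [Finset.union_compl]]
    rw [Finset.sum_union disjoint_compl_right]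
    have h2 : ∑ u ∈ (Finset.univ.image f)ᶜ, Function.extend f x 0 u * g u = 0 := by
      apply Finset.sum_eq_zero
      intro u hu
      have : ¬ ∃ a, f a = u := by
        simpa [Finset.mem_compl, Finset.mem_image] using hu
      rw [Function.extend_apply' _ _ _ this]
      simp
    rw [h2, add_zero, Finset.sum_image (by intro a _ b _ hab; exact hf hab)]
    simp [hf.extend_apply]
  refine Matrix.posDef_iff_dotProduct_mulVec.mpr ⟨?_, ?_⟩
  · exact hM.1.submatrix f
  · intro x hx
    set y : n → ℝ := Function.extend f x 0 with hy
    have hyne : y ≠ 0 := by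
      intro h0
      apply hx
      funext i
      have := congrFun h0 (f i)
      rwa [hy, hf.extend_apply] at this
    have hq := hM.dotProduct_mulVec_pos hyne
    have hcalc : star y ⬝ᵥ M *ᵥ y = star x ⬝ᵥ (M.submatrix f f) *ᵥ x := by
      simp only [star_trivial, dotProduct, mulVec, submatrix_apply]
      rw [key]
      refine Finset.sum_congr rfl fun i _ => ?_
      congr 1
      have : ∀ v, M (f i) v * y v = y v * M (f i) v := fun v => mul_comm _ _
      calc ∑ v, M (f i) v * y v = ∑ v, y v * M (f i) v := by simp_rw [this]
        _ = ∑ j, x j * M (f i) (f j) := key x _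
        _ = ∑ j, M (f i) (f j) * x j := by simp_rw [mul_comm]
    rwa [hcalc] at hq

/-- For a positive semidefinite real matrix `W`, `1 ≤ det (1 + W)`. -/
lemma one_le_det_one_add {W : Matrix n n ℝ} (hW : W.PosSemidef) : 1 ≤ (1 + W).det := by
  classical
  have hH := hW.1
  set D : Matrix n n ℝ := Matrix.diagonal (RCLike.ofReal ∘ hH.eigenvalues) with hD
  set U : Matrix n n ℝ := (hH.eigenvectorUnitary : Matrix n n ℝ) with hU
  have hspec : W = U * D * star U := hH.spectral_theorem
  have hUU : U * star U = 1 := Matrix.mem_unitaryGroup_iff.mp hH.eigenvectorUnitary.2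
  have h1 : (1 : Matrix n n ℝ) + W = U * ((1 : Matrix n n ℝ) + D) * star U := by
    calc (1 : Matrix n n ℝ) + W = U * star U + U * D * star U := by rw [hUU, ← hspec]
      _ = (U * 1 + U * D) * star U := by rw [Matrix.add_mul, Matrix.mul_one]
      _ = U * ((1 : Matrix n n ℝ) + D) * star U := by rw [Matrix.mul_add, Matrix.mul_one]
  have hdetU : U.det * (star U).det = 1 := by rw [← Matrix.det_mul, hUU, Matrix.det_one]
  have h2 : ((1 : Matrix n n ℝ) + W).det = ((1 : Matrix n n ℝ) + D).det := by
    rw [h1, Matrix.det_mul, Matrix.det_mul]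
    calc U.det * ((1 : Matrix n n ℝ) + D).det * (star U).det
        = (U.det * (star U).det) * ((1 : Matrix n n ℝ) + D).det := by ring
      _ = ((1 : Matrix n n ℝ) + D).det := by rw [hdetU, one_mul]
  have h3 : (1 : Matrix n n ℝ) + D = Matrix.diagonal (fun i => 1 + hH.eigenvalues i) := by
    rw [hD, ← Matrix.diagonal_one, Matrix.diagonal_add]
    congr 1
  rw [h2, h3, Matrix.det_diagonal]
  calc (1 : ℝ) = ∏ _i : n, 1 := by simp
    _ ≤ ∏ i : n, (1 + hH.eigenvalues i) :=
      Finset.prod_le_prod (fun i _ => zero_le_one)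
        (fun i _ => by linarith [hW.eigenvalues_nonneg i])

/-- The determinant of a positive semidefinite real matrix is nonnegative. -/
lemma psd_det_nonneg {W : Matrix n n ℝ} (hW : W.PosSemidef) : 0 ≤ W.det := by
  rw [hW.1.det_eq_prod_eigenvalues]
  exact Finset.prod_nonneg fun i _ => by simpa using hW.eigenvalues_nonneg i

open scoped MatrixOrder in
/-- Monotonicity of determinants : `det Y ≤ det (Y + Z)` for `Y, Z` positive semidefinite. -/
lemma det_le_det_add {Y Z : Matrix n n ℝ} (hY : Y.PosSemidef) (hZ : Z.PosSemidef) :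
    Y.det ≤ (Y + Z).det := by
  classical
  rcases eq_or_ne Y.det 0 with h0 | h0
  · rw [h0]
    exact psd_det_nonneg (hY.add hZ)
  · set Q := CFC.sqrt Y with hQ
    have hQQ : Q * Q = Y := CFC.sqrt_mul_sqrt_self Y hY.nonneg
    have hQdet : Q.det ≠ 0 := by
      intro h
      apply h0
      rw [← hQQ, Matrix.det_mul, h, zero_mul]
    have hQunit : IsUnit Q.det := isUnit_iff_ne_zero.mpr hQdet
    have hQH : Q.IsHermitian := (CFC.sqrt_nonneg Y).posSemidef.1
    have hW : (Q⁻¹ * Z * Q⁻¹).PosSemidef := by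
      have := hZ.conjTranspose_mul_mul_same (Q⁻¹)
      rwa [hQH.inv.eq] at this
    have hkey : Y + Z = Q * (1 + Q⁻¹ * Z * Q⁻¹) * Q := by
      rw [Matrix.mul_add, Matrix.add_mul, Matrix.mul_one]
      congr 1
      · exact hQQ.symm
      · symm
        calc Q * (Q⁻¹ * Z * Q⁻¹) * Q = (Q * Q⁻¹) * Z * (Q⁻¹ * Q) := by
              simp only [Matrix.mul_assoc]
        _ = Z := by
              rw [Matrix.mul_nonsing_inv _ hQunit, Matrix.nonsing_inv_mul _ hQunit,
                Matrix.one_mul, Matrix.mul_one]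
    have hYpos : 0 < Y.det := lt_of_le_of_ne (psd_det_nonneg hY) (Ne.symm h0)
    rw [hkey, Matrix.det_mul, Matrix.det_mul]
    have h1 : 1 ≤ (1 + Q⁻¹ * Z * Q⁻¹).det := one_le_det_one_add hW
    have hQdet2 : Q.det * Q.det = Y.det := by rw [← Matrix.det_mul, hQQ]
    nlinarith [sq_nonneg Q.det]

/-- Jacobi-type identity at the level of block matrices. -/
lemma jacobi_blocks {M N : Matrix (m ⊕ n) (m ⊕ n) ℝ} (h : M * N = 1) :
    M.det * (N.toBlocks₂₂).det = (M.toBlocks₁₁).det := by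
  classical
  set A := M.toBlocks₁₁; set B := M.toBlocks₁₂; set C := M.toBlocks₂₁; set D := M.toBlocks₂₂
  set A' := N.toBlocks₁₁; set B' := N.toBlocks₁₂; set C' := N.toBlocks₂₁; set D' := N.toBlocks₂₂
  have hM : M = Matrix.fromBlocks A B C D := (Matrix.fromBlocks_toBlocks M).symm
  have hN : N = Matrix.fromBlocks A' B' C' D' := (Matrix.fromBlocks_toBlocks N).symm
  have h' : Matrix.fromBlocks (A * A' + B * C') (A * B' + B * D')
      (C * A' + D * C') (C * B' + D * D') = 1 := by
    rw [← Matrix.fromBlocks_multiply, ← hM, ← hN, h]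
  have h12 : Matrix.toBlocks₁₂ (1 : Matrix (m ⊕ n) (m ⊕ n) ℝ) = 0 := by
    ext i j; simp [Matrix.toBlocks₁₂, Matrix.one_apply]
  have h22 : Matrix.toBlocks₂₂ (1 : Matrix (m ⊕ n) (m ⊕ n) ℝ) = 1 := by
    ext i j; simp [Matrix.toBlocks₂₂, Matrix.one_apply]
  have e12 : A * B' + B * D' = 0 := by
    have hc := congrArg Matrix.toBlocks₁₂ h'
    rwa [Matrix.toBlocks_fromBlocks₁₂, h12] at hc
  have e22 : C * B' + D * D' = 1 := by
    have hc := congrArg Matrix.toBlocks₂₂ h'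
    rwa [Matrix.toBlocks_fromBlocks₂₂, h22] at hc
  have hcalc : (M * Matrix.fromBlocks 1 B' 0 D').det = M.det * D'.det := by
    rw [Matrix.det_mul, Matrix.det_fromBlocks_zero₂₁, Matrix.det_one, one_mul]
  have hcalc2 : M * Matrix.fromBlocks 1 B' 0 D' = Matrix.fromBlocks A 0 C 1 := by
    rw [hM, Matrix.fromBlocks_multiply]
    rw [Matrix.mul_one, Matrix.mul_one, Matrix.mul_zero, Matrix.mul_zero, add_zero, add_zero,
      e12, e22]
  rw [← hcalc, hcalc2, Matrix.det_fromBlocks_zero₁₂, Matrix.det_one, mul_one]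

variable {V : Type*} [Fintype V] [DecidableEq V]

/-- The tautological equivalence `↥Bᶜ ⊕ ↥B ≃ V`. -/
def splitEquiv (B : Finset V) : ↥(Bᶜ) ⊕ ↥B ≃ V where
  toFun := Sum.elim Subtype.val Subtype.val
  invFun v := if h : v ∈ B then Sum.inr ⟨v, h⟩ else Sum.inl ⟨v, Finset.mem_compl.mpr h⟩
  left_inv := by
    rintro (⟨v, hv⟩ | ⟨v, hv⟩)
    · simp [Finset.mem_compl.mp hv]
    · simp [hv]
  right_inv v := by by_cases h : v ∈ B <;> simp [h]

lemma subm_det_congr (M : Matrix V V ℝ) {B C : Finset V} (h : B = C) :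
    (subm M B B).det = (subm M C C).det := by subst h; rfl

/-- Jacobi's identity on complementary minors, in the form
`det S ⬝ det ((S⁻¹)_{BB}) = det (S_{BᶜBᶜ})`. -/
lemma jacobi (S : Matrix V V ℝ) (hS : IsUnit S.det) (B : Finset V) :
    S.det * (subm S⁻¹ B B).det = (subm S Bᶜ Bᶜ).det := by
  classical
  set e := splitEquiv B
  have h1 : S.submatrix e e * S⁻¹.submatrix e e = 1 := by
    rw [Matrix.submatrix_mul_equiv, Matrix.mul_nonsing_inv _ hS, Matrix.submatrix_one_equiv]
  have h2 := jacobi_blocks h1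
  rw [Matrix.det_submatrix_equiv_self] at h2
  exact h2

/-- The tautological equivalence `↥B ⊕ ↥C ≃ ↥(B ∪ C)` for disjoint finsets. -/
def sumUnionEquiv (B C : Finset V) (h : Disjoint B C) : ↥B ⊕ ↥C ≃ ↥(B ∪ C) where
  toFun := Sum.elim (fun b => ⟨b.1, Finset.mem_union_left _ b.2⟩)
    (fun c => ⟨c.1, Finset.mem_union_right _ c.2⟩)
  invFun x := if hx : x.1 ∈ B then Sum.inl ⟨x.1, hx⟩
    else Sum.inr ⟨x.1, (Finset.mem_union.mp x.2).resolve_left hx⟩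
  left_inv := by
    rintro (⟨v, hv⟩ | ⟨v, hv⟩)
    · simp [hv]
    · simp [Finset.disjoint_right.mp h hv]
  right_inv x := by by_cases hx : x.1 ∈ B <;> simp [hx]

/-- Fischer's inequality at the level of block matrices. -/
lemma fischer_blocks {A : Matrix m m ℝ} {B : Matrix m n ℝ} {D : Matrix n n ℝ}
    (hM : (Matrix.fromBlocks A B Bᴴ D).PosDef) :
    (Matrix.fromBlocks A B Bᴴ D).det ≤ A.det * D.det := by
  classical
  have hA : A.PosDef := by
    have h := posDef_submatrix_inj hM Sum.inl Sum.inl_injective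
    have he : (Matrix.fromBlocks A B Bᴴ D).submatrix Sum.inl Sum.inl = A := by ext i j; rfl
    rwa [he] at h
  have hD : D.PosDef := by
    have h := posDef_submatrix_inj hM Sum.inr Sum.inr_injective
    have he : (Matrix.fromBlocks A B Bᴴ D).submatrix Sum.inr Sum.inr = D := by ext i j; rfl
    rwa [he] at h
  letI : Invertible D := hD.isUnit.invertible
  rw [Matrix.det_fromBlocks₂₂, invOf_eq_nonsing_inv]
  have hX : (B * D⁻¹ * Bᴴ).PosSemidef := hD.inv.posSemidef.mul_mul_conjTranspose_same B
  have hY : (A - B * D⁻¹ * Bᴴ).PosSemidef :=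
    (Matrix.PosDef.fromBlocks₂₂ A B hD).mp hM.posSemidef
  have hle : (A - B * D⁻¹ * Bᴴ).det ≤ A.det := by
    have := det_le_det_add hY hX
    rwa [sub_add_cancel] at this
  calc D.det * (A - B * D⁻¹ * Bᴴ).det ≤ D.det * A.det :=
        mul_le_mul_of_nonneg_left hle hD.det_pos.le
    _ = A.det * D.det := mul_comm _ _

/-- Fischer's inequality for disjoint principal submatrices. -/
lemma fischer (S : Matrix V V ℝ) (hS : S.PosDef) (B C : Finset V) (h : Disjoint B C) :
    (subm S (B ∪ C) (B ∪ C)).det ≤ (subm S B B).det * (subm S C C).det := by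
  classical
  set g : ↥B ⊕ ↥C → V := Sum.elim Subtype.val Subtype.val with hg
  have hginj : Function.Injective g := by
    rintro (⟨a, ha⟩ | ⟨a, ha⟩) (⟨b, hb⟩ | ⟨b, hb⟩) hab <;>
      simp only [hg, Sum.elim_inl, Sum.elim_inr] at hab
    · simp [hab]
    · exact absurd (hab ▸ hb) (Finset.disjoint_left.mp h ha)
    · exact absurd (hab ▸ hb) (Finset.disjoint_right.mp h ha)
    · simp [hab]
  have hMg : (S.submatrix g g).PosDef := posDef_submatrix_inj hS g hginj
  have hCB : subm S C B = (subm S B C)ᴴ := by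
    ext i j
    have := congrFun (congrFun hS.1 i.1) j.1
    simpa [subm, Matrix.conjTranspose_apply] using this.symm
  have hblocks : S.submatrix g g
      = Matrix.fromBlocks (subm S B B) (subm S B C) (subm S B C)ᴴ (subm S C C) := by
    rw [← hCB]
    ext (i | i) (j | j) <;> rfl
  rw [hblocks] at hMg
  have hfb := fischer_blocks hMg
  have hdet : (subm S (B ∪ C) (B ∪ C)).det = (S.submatrix g g).det := by
    have he : S.submatrix g g
        = (subm S (B ∪ C) (B ∪ C)).submatrix (sumUnionEquiv B C h) (sumUnionEquiv B C h) := by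
      ext (i | i) (j | j) <;> rfl
    rw [he, Matrix.det_submatrix_equiv_self]
  rw [hdet, hblocks]
  exact hfb

end Aux

/-- factorization of a covariance path weight into a partial covariance
weight and an inflation factor: `ω(π,Σ) = ω(π, Σ_{AA·Ā}) × IF_P^{Ā}`, with the
consequent sign equality, absolute-value inequality, and equality criterion. -/
theorem weight_factorization {V : Type*} [Fintype V] [DecidableEq V]
    (S : Matrix V V ℝ) (hS : S.PosDef) (G : SimpleGraph V) [DecidableRel G.Adj]
    (hadapt : Adapted S⁻¹ G) {x y : V} (hxy : x ≠ y) (p : G.Walk x y) (hp : p.IsPath)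
    (A : Finset V) (hPA : p.support.toFinset ⊆ A) :
    pathWeight S p = partialPathWeight S A p * inflF S p.support.toFinset Aᶜ ∧
    Real.sign (pathWeight S p) = Real.sign (partialPathWeight S A p) ∧
    |partialPathWeight S A p| ≤ |pathWeight S p| ∧
    (pathWeight S p ≠ 0 →
      (|pathWeight S p| = |partialPathWeight S A p| ↔
        inflF S p.support.toFinset Aᶜ = 1)) := by
  classical
  have hdetS : 0 < S.det := hS.det_pos
  have hunit : IsUnit S.det := isUnit_iff_ne_zero.mpr hdetS.ne'
  have hPDsub : ∀ B : Finset V, (subm S B B).PosDef := fun B =>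
    posDef_submatrix_inj hS _ Subtype.val_injective
  have ha : 0 < (subm S p.support.toFinset p.support.toFinset).det := (hPDsub _).det_pos
  have hb : 0 < (subm S Aᶜ Aᶜ).det := (hPDsub _).det_pos
  have hc : 0 < (subm S (p.support.toFinset ∪ Aᶜ) (p.support.toFinset ∪ Aᶜ)).det :=
    (hPDsub _).det_pos
  have j1 : S.det * (subm S⁻¹ p.support.toFinsetᶜ p.support.toFinsetᶜ).det
      = (subm S p.support.toFinset p.support.toFinset).det := by
    have := jacobi S hunit p.support.toFinsetᶜ
    rwa [subm_det_congr S (compl_compl p.support.toFinset)] at this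
  have j2 : S.det * (subm S⁻¹ A A).det = (subm S Aᶜ Aᶜ).det := jacobi S hunit A
  have j3 : S.det * (subm S⁻¹ (A \ p.support.toFinset) (A \ p.support.toFinset)).det
      = (subm S (p.support.toFinset ∪ Aᶜ) (p.support.toFinset ∪ Aᶜ)).det := by
    have := jacobi S hunit (A \ p.support.toFinset)
    rwa [subm_det_congr S (show (A \ p.support.toFinset)ᶜ = p.support.toFinset ∪ Aᶜ by
      ext v; simp only [Finset.mem_compl, Finset.mem_sdiff, Finset.mem_union]; tauto)] at this
  have hKdet : S⁻¹.det = S.det⁻¹ := by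
    rw [Matrix.det_nonsing_inv, Ring.inverse_eq_inv]
  have r1 : (subm S⁻¹ p.support.toFinsetᶜ p.support.toFinsetᶜ).det / S⁻¹.det
      = (subm S p.support.toFinset p.support.toFinset).det := by
    have hxx : (subm S⁻¹ p.support.toFinsetᶜ p.support.toFinsetᶜ).det
        = (subm S p.support.toFinset p.support.toFinset).det / S.det := by
      rw [eq_div_iff hdetS.ne', mul_comm]
      exact j1
    rw [hKdet, hxx]
    field_simp
  have hx : (subm S⁻¹ (A \ p.support.toFinset) (A \ p.support.toFinset)).det
      = (subm S (p.support.toFinset ∪ Aᶜ) (p.support.toFinset ∪ Aᶜ)).det / S.det := by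
    rw [eq_div_iff hdetS.ne', mul_comm]
    exact j3
  have hy : (subm S⁻¹ A A).det = (subm S Aᶜ Aᶜ).det / S.det := by
    rw [eq_div_iff hdetS.ne', mul_comm]
    exact j2
  have r2 : (subm S⁻¹ (A \ p.support.toFinset) (A \ p.support.toFinset)).det
        / (subm S⁻¹ A A).det
      = (subm S (p.support.toFinset ∪ Aᶜ) (p.support.toFinset ∪ Aᶜ)).det
        / (subm S Aᶜ Aᶜ).det := by
    rw [hx, hy]
    field_simp
  have hfac : pathWeight S p = partialPathWeight S A p * inflF S p.support.toFinset Aᶜ := by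
    simp only [pathWeight, partialPathWeight, inflF]
    rw [r1, r2]
    field_simp
  have hIFpos : 0 < inflF S p.support.toFinset Aᶜ := by
    simp only [inflF]
    exact div_pos (mul_pos ha hb) hc
  have hdisj : Disjoint p.support.toFinset Aᶜ :=
    Finset.disjoint_left.mpr fun v hv hvc => (Finset.mem_compl.mp hvc) (hPA hv)
  have hIF1 : 1 ≤ inflF S p.support.toFinset Aᶜ := by
    simp only [inflF]
    rw [le_div_iff₀ hc, one_mul]
    exact fischer S hS _ _ hdisj
  have habs : |pathWeight S p| = |partialPathWeight S A p| * inflF S p.support.toFinset Aᶜ := by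
    rw [hfac, abs_mul, abs_of_pos hIFpos]
  refine ⟨hfac, ?_, ?_, ?_⟩
  · rcases lt_trichotomy (partialPathWeight S A p) 0 with h | h | h
    · rw [hfac, Real.sign_of_neg (mul_neg_of_neg_of_pos h hIFpos), Real.sign_of_neg h]
    · rw [hfac, h, zero_mul]
    · rw [hfac, Real.sign_of_pos (mul_pos h hIFpos), Real.sign_of_pos h]
  · rw [habs]
    exact le_mul_of_one_le_right (abs_nonneg _) hIF1
  · intro hne
    have hpne : partialPathWeight S A p ≠ 0 := fun h => hne (by rw [hfac, h, zero_mul])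
    constructor
    · intro heq
      refine mul_left_cancel₀ (abs_ne_zero.mpr hpne) ?_
      rw [← habs, heq, mul_one]
    · intro h1
      rw [habs, h1, mul_one]
end

section
/- Explicit form of inflated correlation path weights. Let K = Σ⁻¹ be adapted to G = (V,E), let Φ^V be the inflated correlation matrix of X_V, and let π be a path between x and y in G with P = V(π). Then ω(π, Φ^V) = det(Φ^V_PP) · ∏_{{u,v}∈E(π)} ρ_{uv·V∖{u,v}}, and the partial weight satisfies ω(π, Φ^P_{PP·P̄}) = det(Φ^P_{PP·P̄}) · ∏_{{u,v}∈E(π)} ρ_{uv·V∖{u,v}}; moreover ω(π, Φ^V) = ω(π, Φ^P_{PP·P̄}) × IF_P. -/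
open Matrix BigOperators Finset

variable {V : Type*} [Fintype V] [DecidableEq V]

/-! ### Auxiliary lemmas -/

section Aux

lemma neg_prod_map {α : Type*} (l : List α) (f : α → ℝ) :
    (l.map fun a => -f a).prod = (-1 : ℝ) ^ l.length * (l.map f).prod := by
  induction l with
  | nil => simp
  | cons a t ih => simp [ih, pow_succ]; ring

lemma posDef_submatrix_of_injective {m n : Type*} [Fintype m] [Fintype n]
    {M : Matrix n n ℝ} (hM : M.PosDef) (f : m → n) (hf : Function.Injective f) :
    (M.submatrix f f).PosDef := by
  classical
  refine Matrix.PosDef.of_dotProduct_mulVec_pos (hM.1.submatrix f) fun x hx => ?_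
  set y : n → ℝ := fun v => ∑ i, if f i = v then x i else 0 with hy
  have hyf : ∀ i, y (f i) = x i := by
    intro i
    rw [hy]
    simp only
    rw [Finset.sum_eq_single i]
    · simp
    · intro j _ hj
      simp only [ite_eq_right_iff]
      intro h; exact absurd (hf h) hj
    · simp
  have hy0 : y ≠ 0 := by
    intro h
    apply hx
    funext i
    have := congrFun h (f i)
    simpa [hyf i] using this
  have hgen : ∀ g : n → ℝ, ∑ v, y v * g v = ∑ i, x i * g (f i) := by
    intro g
    simp only [hy, Finset.sum_mul]
    rw [Finset.sum_comm]
    refine Finset.sum_congr rfl fun i _ => ?_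
    rw [Finset.sum_eq_single (f i)]
    · simp
    · intro v _ hv; rw [if_neg (Ne.symm hv), zero_mul]
    · simp
  have key : (star x) ⬝ᵥ ((M.submatrix f f) *ᵥ x) = (star y) ⬝ᵥ (M *ᵥ y) := by
    simp only [star_trivial, dotProduct, mulVec, submatrix_apply]
    rw [hgen fun u => ∑ v, M u v * y v]
    refine Finset.sum_congr rfl fun i _ => ?_
    congr 1
    rw [show (∑ v, M (f i) v * y v) = ∑ v, y v * M (f i) v from
      Finset.sum_congr rfl fun v _ => mul_comm _ _, hgen fun v => M (f i) v]
    exact Finset.sum_congr rfl fun j _ => mul_comm _ _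
  rw [key]
  exact hM.dotProduct_mulVec_pos hy0

lemma posDef_diag_pos_s16 {n : Type*} [Fintype n] [DecidableEq n] {M : Matrix n n ℝ}
    (hM : M.PosDef) (u : n) : 0 < M u u := by
  have := hM.dotProduct_mulVec_pos (x := Pi.single u 1) (by simp [Function.ne_iff])
  simpa [dotProduct, mulVec, Pi.single_apply, Finset.sum_ite_eq, Finset.sum_ite_eq'] using this

/-- The canonical equivalence `↥P ⊕ ↥Pᶜ ≃ V`. -/
def sumComplEquiv (P : Finset V) : ↥P ⊕ ↥(Pᶜ : Finset V) ≃ V :=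
  (Equiv.sumCongr (Equiv.refl ↥P) (Equiv.subtypeEquivRight fun x => Finset.mem_compl)).trans
    (Equiv.sumCompl (· ∈ P))

lemma submatrix_sumComplEquiv (M : Matrix V V ℝ) (P : Finset V) :
    M.submatrix (sumComplEquiv P) (sumComplEquiv P) =
      fromBlocks (subm M P P) (subm M P Pᶜ) (subm M Pᶜ P) (subm M Pᶜ Pᶜ) := by
  ext i j
  cases i <;> cases j <;> rfl

lemma subm_posDef {M : Matrix V V ℝ} (hM : M.PosDef) (A : Finset V) :
    (subm M A A).PosDef :=
  posDef_submatrix_of_injective hM (Subtype.val : ↥A → V) Subtype.val_injective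

lemma inflCorr_eq_diag_mul (S : Matrix V V ℝ) :
    inflCorr S = Matrix.diagonal (fun u => Real.sqrt (S⁻¹ u u)) * S *
      Matrix.diagonal (fun u => Real.sqrt (S⁻¹ u u)) := by
  ext u v
  simp [inflCorr, Matrix.mul_diagonal, Matrix.diagonal_mul, mul_comm, mul_assoc]

lemma inflCorr_posDef {S : Matrix V V ℝ} (hS : S.PosDef) (hpos : ∀ u, 0 < S⁻¹ u u) :
    (inflCorr S).PosDef := by
  set d : V → ℝ := fun u => Real.sqrt (S⁻¹ u u) with hd
  have hd0 : ∀ u, d u ≠ 0 := fun u => ne_of_gt (Real.sqrt_pos.mpr (hpos u))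
  have hD : inflCorr S = (Matrix.diagonal d)ᴴ * S * Matrix.diagonal d := by
    rw [inflCorr_eq_diag_mul]
    congr 1
    · congr 1
      rw [Matrix.diagonal_conjTranspose]
      simp [star_trivial]
      intro i; rfl
  rw [hD]
  refine Matrix.PosDef.of_dotProduct_mulVec_pos (isHermitian_conjTranspose_mul_mul _ hS.1) fun x hx => ?_
  have hDx : Matrix.diagonal d *ᵥ x ≠ 0 := by
    obtain ⟨u, hu⟩ := Function.ne_iff.mp hx
    refine Function.ne_iff.mpr ⟨u, ?_⟩
    simp only [Matrix.mulVec_diagonal, Pi.zero_apply]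
    exact mul_ne_zero (hd0 u) hu
  simpa only [star_mulVec, dotProduct_mulVec, vecMul_vecMul] using hS.dotProduct_mulVec_pos hDx

lemma inflCorr_inv {S : Matrix V V ℝ} (hS : S.PosDef) (hpos : ∀ u, 0 < S⁻¹ u u) :
    (inflCorr S)⁻¹ = corrScale S⁻¹ := by
  set d : V → ℝ := fun u => Real.sqrt (S⁻¹ u u) with hd
  have hd0 : ∀ u, d u ≠ 0 := fun u => ne_of_gt (Real.sqrt_pos.mpr (hpos u))
  have hDinv : (Matrix.diagonal d)⁻¹ = Matrix.diagonal (fun u => (d u)⁻¹) := by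
    apply Matrix.inv_eq_right_inv
    rw [Matrix.diagonal_mul_diagonal]
    have : (fun u => d u * (d u)⁻¹) = fun _ => (1 : ℝ) := funext fun u => mul_inv_cancel₀ (hd0 u)
    rw [this, Matrix.diagonal_one]
  rw [inflCorr_eq_diag_mul, Matrix.mul_inv_rev, Matrix.mul_inv_rev, hDinv]
  ext u v
  simp only [corrScale, Matrix.of_apply, Matrix.diagonal_mul, Matrix.mul_diagonal]
  rw [div_eq_mul_inv, mul_inv]
  ring

lemma subm_inflCorr_eq (S : Matrix V V ℝ) (A : Finset V) :
    subm (inflCorr S) A A =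
      Matrix.diagonal (fun i : ↥A => Real.sqrt (S⁻¹ i.1 i.1)) * subm S A A *
        Matrix.diagonal (fun i : ↥A => Real.sqrt (S⁻¹ i.1 i.1)) := by
  ext i j
  simp [subm, inflCorr, Matrix.mul_diagonal, Matrix.diagonal_mul, mul_comm, mul_assoc]

lemma det_subm_inflCorr (S : Matrix V V ℝ) (hpos : ∀ u, 0 < S⁻¹ u u) (A : Finset V) :
    (subm (inflCorr S) A A).det = (∏ u ∈ A, S⁻¹ u u) * (subm S A A).det := by
  rw [subm_inflCorr_eq, Matrix.det_mul, Matrix.det_mul, Matrix.det_diagonal]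
  rw [mul_right_comm]
  congr 1
  rw [← Finset.prod_mul_distrib, ← Finset.prod_coe_sort A (fun u => S⁻¹ u u)]
  exact Finset.prod_congr rfl fun i _ => Real.mul_self_sqrt (le_of_lt (hpos i.1))

lemma det_inflCorr (S : Matrix V V ℝ) (hpos : ∀ u, 0 < S⁻¹ u u) :
    (inflCorr S).det = (∏ u, S⁻¹ u u) * S.det := by
  rw [inflCorr_eq_diag_mul, Matrix.det_mul, Matrix.det_mul, Matrix.det_diagonal]
  rw [mul_right_comm]
  congr 1
  rw [← Finset.prod_mul_distrib]
  exact Finset.prod_congr rfl fun u _ => Real.mul_self_sqrt (le_of_lt (hpos u))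

lemma det_subm_union_compl (S : Matrix V V ℝ) (P : Finset V) :
    (subm S (P ∪ Pᶜ) (P ∪ Pᶜ)).det = S.det := by
  let e2 : ↥(P ∪ Pᶜ : Finset V) ≃ V :=
    { toFun := Subtype.val
      invFun := fun v => ⟨v, by simp⟩
      left_inv := fun i => Subtype.ext rfl
      right_inv := fun v => rfl }
  exact Matrix.det_submatrix_equiv_self e2 S

/-- The Jacobi / Schur complement identities for a positive definite matrix. -/
lemma jacobi_s16 {Φ : Matrix V V ℝ} (hΦ : Φ.PosDef) (P : Finset V) :
    (subm Φ P P).det * Φ⁻¹.det = (subm Φ⁻¹ Pᶜ Pᶜ).det ∧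
    (subm Φ Pᶜ Pᶜ).det * (pcov Φ P).det = Φ.det ∧
    (pcov Φ P)⁻¹ = subm Φ⁻¹ P P := by
  classical
  set e := sumComplEquiv P with he
  set A := subm Φ P P with hA'
  set B := subm Φ P Pᶜ with hB'
  set C := subm Φ Pᶜ P with hC'
  set Dm := subm Φ Pᶜ Pᶜ with hD'
  have hM' : Φ.submatrix e e = fromBlocks A B C Dm := submatrix_sumComplEquiv Φ P
  have hA : A.PosDef := subm_posDef hΦ P
  have hD : Dm.PosDef := subm_posDef hΦ Pᶜ
  have hdetΦ : Φ.det ≠ 0 := ne_of_gt hΦ.det_pos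
  letI : Invertible A := A.invertibleOfIsUnitDet (isUnit_iff_ne_zero.mpr (ne_of_gt hA.det_pos))
  letI : Invertible Dm := Dm.invertibleOfIsUnitDet (isUnit_iff_ne_zero.mpr (ne_of_gt hD.det_pos))
  have hdetM' : (fromBlocks A B C Dm).det = Φ.det := by
    rw [← hM', Matrix.det_submatrix_equiv_self]
  have hφinv : Φ⁻¹.det = (Φ.det)⁻¹ := by rw [Matrix.det_nonsing_inv, Ring.inverse_eq_inv']
  have hinvD : (⅟Dm : Matrix _ _ ℝ) = Dm⁻¹ := invOf_eq_nonsing_inv Dm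
  have hpcov : A - B * ⅟Dm * C = pcov Φ P := by rw [hinvD]; rfl
  have h22 : Φ.det = Dm.det * (pcov Φ P).det := by
    rw [← hdetM', Matrix.det_fromBlocks₂₂, hpcov]
  have hpcovdet : (pcov Φ P).det ≠ 0 := by
    intro h; rw [h, mul_zero] at h22; exact hdetΦ h22
  letI : Invertible (A - B * ⅟Dm * C) :=
    Matrix.invertibleOfIsUnitDet _ (by rw [hpcov]; exact isUnit_iff_ne_zero.mpr hpcovdet)
  letI : Invertible (fromBlocks A B C Dm) :=
    Matrix.invertibleOfIsUnitDet _ (by rw [hdetM']; exact isUnit_iff_ne_zero.mpr hdetΦ)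
  have hblockinv : (fromBlocks A B C Dm)⁻¹ =
      fromBlocks (subm Φ⁻¹ P P) (subm Φ⁻¹ P Pᶜ) (subm Φ⁻¹ Pᶜ P) (subm Φ⁻¹ Pᶜ Pᶜ) := by
    rw [← hM', Matrix.inv_submatrix_equiv, submatrix_sumComplEquiv]
  have h3 : (pcov Φ P)⁻¹ = subm Φ⁻¹ P P := by
    have h' := Matrix.invOf_fromBlocks₂₂_eq A B C Dm
    rw [invOf_eq_nonsing_inv (fromBlocks A B C Dm), hblockinv] at h'
    have h'' := congrArg Matrix.toBlocks₁₁ h'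
    simp only [Matrix.toBlocks_fromBlocks₁₁] at h''
    rw [h'', invOf_eq_nonsing_inv, hpcov]
  have hinvA : (⅟A : Matrix _ _ ℝ) = A⁻¹ := invOf_eq_nonsing_inv A
  have h11 : Φ.det = A.det * (Dm - C * ⅟A * B).det := by
    rw [← hdetM', Matrix.det_fromBlocks₁₁]
  have hSc2 : (Dm - C * ⅟A * B).det ≠ 0 := by
    intro h; rw [h, mul_zero] at h11; exact hdetΦ h11
  letI : Invertible (Dm - C * ⅟A * B) :=
    Matrix.invertibleOfIsUnitDet _ (isUnit_iff_ne_zero.mpr hSc2)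
  have h1' : subm Φ⁻¹ Pᶜ Pᶜ = (Dm - C * ⅟A * B)⁻¹ := by
    have h' := Matrix.invOf_fromBlocks₁₁_eq A B C Dm
    rw [invOf_eq_nonsing_inv (fromBlocks A B C Dm), hblockinv] at h'
    have h'' := congrArg Matrix.toBlocks₂₂ h'
    simp only [Matrix.toBlocks_fromBlocks₂₂] at h''
    rw [h'', invOf_eq_nonsing_inv]
  refine ⟨?_, by rw [← h22], h3⟩
  rw [h1', Matrix.det_nonsing_inv, Ring.inverse_eq_inv', Matrix.det_nonsing_inv,
    Ring.inverse_eq_inv', h11, mul_inv, ← mul_assoc,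
    mul_inv_cancel₀ (ne_of_gt hA.det_pos), one_mul]

/-- Rewrite `subPathWeight` with entries expressed by a global function. -/
lemma subPathWeight_eq {P : Finset V} (M : Matrix ↥P ↥P ℝ) {G : SimpleGraph V} {x y : V}
    (p : G.Walk x y) (hpm : ∀ v ∈ p.support, v ∈ P) (f : V → V → ℝ)
    (hN : ∀ u v : ↥P, M⁻¹ u v = f u.1 v.1) :
    subPathWeight M p hpm = (-1 : ℝ) ^ (p.support.toFinset.card + 1) * (1 / M⁻¹.det) *
      (p.darts.map fun d => f d.toProd.1 d.toProd.2).prod := by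
  unfold subPathWeight
  congr 1
  rw [← List.attach_map_val (l := p.darts) (f := fun d => f d.toProd.1 d.toProd.2)]
  exact congrArg List.prod (List.map_congr_left fun d _ => hN _ _)

end Aux

/-- explicit form of inflated correlation path weights:
`ω(π, Φ^V) = det(Φ^V_PP) ∏ ρ_{uv·V∖{u,v}}`,
`ω(π, Φ^P_{PP·P̄}) = det(Φ^P_{PP·P̄}) ∏ ρ_{uv·V∖{u,v}}`, and
`ω(π, Φ^V) = ω(π, Φ^P_{PP·P̄}) × IF_P`. -/
theorem inflated_correlation_weight_explicit {V : Type*} [Fintype V] [DecidableEq V]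
    (S : Matrix V V ℝ) (hS : S.PosDef) (G : SimpleGraph V) [DecidableRel G.Adj]
    (hadapt : Adapted S⁻¹ G) {x y : V} (hxy : x ≠ y) (p : G.Walk x y) (hp : p.IsPath) :
    pathWeight (inflCorr S) p =
      (subm (inflCorr S) p.support.toFinset p.support.toFinset).det * prodPartialCorr S p ∧
    subPathWeight (pcov (inflCorr S) p.support.toFinset) p
        (fun v hv => List.mem_toFinset.mpr hv) =
      (pcov (inflCorr S) p.support.toFinset).det * prodPartialCorr S p ∧
    pathWeight (inflCorr S) p =
      subPathWeight (pcov (inflCorr S) p.support.toFinset) p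
          (fun v hv => List.mem_toFinset.mpr hv) *
        inflF S p.support.toFinset p.support.toFinsetᶜ := by
  classical
  set P := p.support.toFinset with hPdef
  have hK : (S⁻¹).PosDef := hS.inv
  have hpos : ∀ u, 0 < S⁻¹ u u := fun u => posDef_diag_pos_s16 hK u
  set Φ := inflCorr S with hΦdef
  have hΦ : Φ.PosDef := inflCorr_posDef hS hpos
  have hΘcs : Φ⁻¹ = corrScale S⁻¹ := inflCorr_inv hS hpos
  obtain ⟨hJ1, hJ2, hJ3⟩ := jacobi_s16 hΦ P
  have hdetΦ : Φ.det ≠ 0 := ne_of_gt hΦ.det_pos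
  have hφinv : Φ⁻¹.det = (Φ.det)⁻¹ := by rw [Matrix.det_nonsing_inv, Ring.inverse_eq_inv']
  have hΘdet : Φ⁻¹.det ≠ 0 := by rw [hφinv]; exact inv_ne_zero hdetΦ
  have hc : P.card = p.length + 1 := by
    rw [hPdef, List.toFinset_card_of_nodup hp.support_nodup, SimpleGraph.Walk.length_support]
  set L := (p.darts.map fun d => Φ⁻¹ d.toProd.1 d.toProd.2).prod with hL
  have hprodP : prodPartialCorr S p = (-1 : ℝ) ^ p.length * L := by
    rw [prodPartialCorr,
      show (fun d : G.Dart => -(corrScale S⁻¹ d.toProd.1 d.toProd.2)) =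
        fun d : G.Dart => -(Φ⁻¹ d.toProd.1 d.toProd.2) from by rw [hΘcs],
      neg_prod_map, SimpleGraph.Walk.length_darts, hL]
  have hJ1' : (subm Φ⁻¹ Pᶜ Pᶜ).det / Φ⁻¹.det = (subm Φ P P).det := by
    rw [← hJ1, mul_div_assoc, div_self hΘdet, mul_one]
  -- Claim 1
  have claim1 : pathWeight Φ p =
      (subm Φ P P).det * prodPartialCorr S p := by
    unfold pathWeight
    rw [hJ1', hprodP, ← hL, hc, pow_succ, pow_succ]
    ring
  -- Claim 2
  have hpcovdet : (pcov Φ P).det ≠ 0 := by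
    intro h; rw [h, mul_zero] at hJ2; exact hdetΦ hJ2.symm
  have hMinvdet : (1 : ℝ) / ((pcov Φ P)⁻¹).det = (pcov Φ P).det := by
    rw [Matrix.det_nonsing_inv, Ring.inverse_eq_inv', one_div, inv_inv]
  have claim2 : subPathWeight (pcov Φ P) p (fun v hv => List.mem_toFinset.mpr hv) =
      (pcov Φ P).det * prodPartialCorr S p := by
    rw [subPathWeight_eq (pcov Φ P) p _ (fun u v => Φ⁻¹ u v)
      (fun u v => by rw [hJ3]; rfl)]
    rw [hMinvdet, hprodP, ← hL, ← hPdef, hc, pow_succ, pow_succ]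
    ring
  -- Claim 3
  have hsP : (0:ℝ) < (subm S P P).det := (subm_posDef hS P).det_pos
  have hsPc : (0:ℝ) < (subm S Pᶜ Pᶜ).det := (subm_posDef hS Pᶜ).det_pos
  have hs : (0:ℝ) < S.det := hS.det_pos
  have hprodPpos : (0:ℝ) < ∏ u ∈ P, S⁻¹ u u := Finset.prod_pos fun u _ => hpos u
  have hprodPcpos : (0:ℝ) < ∏ u ∈ Pᶜ, S⁻¹ u u := Finset.prod_pos fun u _ => hpos u
  have hprodsplit : (∏ u ∈ P, S⁻¹ u u) * (∏ u ∈ Pᶜ, S⁻¹ u u) = ∏ u, S⁻¹ u u :=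
    Finset.prod_mul_prod_compl P _
  have hdbar : (subm Φ Pᶜ Pᶜ).det ≠ 0 := ne_of_gt (subm_posDef hΦ Pᶜ).det_pos
  have key : (subm Φ P P).det = (pcov Φ P).det * inflF S P Pᶜ := by
    have hm : (pcov Φ P).det = Φ.det / (subm Φ Pᶜ Pᶜ).det := by
      rw [← hJ2, mul_comm, mul_div_assoc, div_self hdbar, mul_one]
    have hgen : ∀ a b s1 s2 sd : ℝ, 0 < a → 0 < b → 0 < s1 → 0 < s2 → 0 < sd →
        a * s1 = a * b * sd / (b * s2) * (s1 * s2 / sd) := by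
      intro a b s1 s2 sd ha hb hs1 hs2 hsd
      field_simp
    rw [inflF, det_subm_union_compl, hm, hΦdef, det_subm_inflCorr S hpos P,
      det_subm_inflCorr S hpos Pᶜ, det_inflCorr S hpos, ← hprodsplit]
    exact hgen _ _ _ _ _ hprodPpos hprodPcpos hsP hsPc hs
  refine ⟨claim1, claim2, ?_⟩
  rw [claim1, claim2, key]
  ring
end
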